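/- arXiv:2411.05765 — 10 statements merged into one kernel-verified Lean document; each statement's English description precedes it below -/
import Mathlib

section
/- For any interval I ⊆ J, the evolution family Φ has uniform bounded h-growth on I if and only if there exist constants K₀ ≥ 1 and β ≥ 0 such that ‖Φ(t,s)‖ ≤ K₀·(h(t)/h(s))^β for all t ≥ s with t, s ∈ I. -/
open Set

noncomputable section

/-- The operation `t ∗ s := h⁻¹ (h t · h s)` on `J`. -/
def star (h hinv : ℝ → ℝ) (t s : ℝ) : ℝ := hinv (h t * h s)

/-- The unit element `e∗ := h⁻¹ 1`. -/
def estar (hinv : ℝ → ℝ) : ℝ := hinv 1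

/-- The inverse `t^{∗-1} := h⁻¹ (1 / h t)`. -/
def sinv (h hinv : ℝ → ℝ) (t : ℝ) : ℝ := hinv (1 / h t)

/-- The absolute value `|t|∗ := t` if `e∗ ≤ t` and `t^{∗-1}` otherwise. -/
def absStar (h hinv : ℝ → ℝ) (t : ℝ) : ℝ := if estar hinv ≤ t then t else sinv h hinv t

/-- `h : J → (0,∞)` is a growth rate: a strictly increasing homeomorphism of
`J = (a₀,∞)` (or `J = ℝ`) onto `(0,∞)`, with (two-sided) inverse `hinv`. -/
structure GrowthRate (J : Set ℝ) (h hinv : ℝ → ℝ) : Prop where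
  J_eq : (∃ a₀ : ℝ, J = Set.Ioi a₀) ∨ J = Set.univ
  mono : StrictMonoOn h J
  cont : ContinuousOn h J
  pos : ∀ t ∈ J, 0 < h t
  inv_left : ∀ t ∈ J, hinv (h t) = t
  inv_mem : ∀ y ∈ Set.Ioi (0:ℝ), hinv y ∈ J
  inv_right : ∀ y ∈ Set.Ioi (0:ℝ), h (hinv y) = y
  inv_cont : ContinuousOn hinv (Set.Ioi 0)

variable {E : Type*} [NormedAddCommGroup E] [NormedSpace ℝ E]

/-- An evolution family on `J`: `Φ t t = I` and `Φ t u ∘ Φ u s = Φ t s`. -/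
def IsEvolutionFamily (J : Set ℝ) (Φ : ℝ → ℝ → (E →L[ℝ] E)) : Prop :=
  (∀ t ∈ J, Φ t t = 1) ∧ (∀ t ∈ J, ∀ u ∈ J, ∀ s ∈ J, Φ t u * Φ u s = Φ t s)

/-- `Φ` has a uniform `h`-dichotomy on `I` with projections `P` and constants `K, α`. -/
def HasUHDWith (I : Set ℝ) (h : ℝ → ℝ) (Φ : ℝ → ℝ → (E →L[ℝ] E))
    (P : ℝ → (E →L[ℝ] E)) (K α : ℝ) : Prop :=
  (∀ t ∈ I, P t * P t = P t) ∧
  (∀ t ∈ I, ∀ s ∈ I, P t * Φ t s = Φ t s * P s) ∧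
  (∀ s ∈ I, ∀ t ∈ I, s ≤ t → ‖Φ t s * P s‖ ≤ K * (h t / h s) ^ (-α)) ∧
  (∀ s ∈ I, ∀ t ∈ I, t ≤ s → ‖Φ t s * (1 - P s)‖ ≤ K * (h s / h t) ^ (-α))

/-- `Φ` has a uniform `h`-dichotomy on `I`. -/
def HasUHD (I : Set ℝ) (h : ℝ → ℝ) (Φ : ℝ → ℝ → (E →L[ℝ] E)) : Prop :=
  ∃ K ≥ (1:ℝ), ∃ α > (0:ℝ), ∃ P : ℝ → (E →L[ℝ] E), HasUHDWith I h Φ P K α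

/-- Uniform bounded `h`-growth on `I`: every solution satisfies
`|x t| ≤ C |x s|` for `s ∈ I` and `t ∈ [s, s∗T] ∩ I`. -/
def UnifBoundedHGrowth (J I : Set ℝ) (h hinv : ℝ → ℝ) (Φ : ℝ → ℝ → (E →L[ℝ] E)) : Prop :=
  ∃ T > estar hinv, ∃ C ≥ (1:ℝ), ∀ s₀ ∈ J, ∀ ξ : E, ∀ s ∈ I, ∀ t ∈ I,
    s ≤ t → t ≤ star h hinv s T → ‖(Φ t s₀) ξ‖ ≤ C * ‖(Φ s s₀) ξ‖

/-- Uniform bounded `h`-decay on `I`: every solution satisfies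
`|x t| ≤ C |x s|` for `s ∈ I` and `t ∈ [s∗T^{∗-1}, s] ∩ I`. -/
def UnifBoundedHDecay (J I : Set ℝ) (h hinv : ℝ → ℝ) (Φ : ℝ → ℝ → (E →L[ℝ] E)) : Prop :=
  ∃ T > estar hinv, ∃ C ≥ (1:ℝ), ∀ s₀ ∈ J, ∀ ξ : E, ∀ s ∈ I, ∀ t ∈ I,
    star h hinv s (sinv h hinv T) ≤ t → t ≤ s → ‖(Φ t s₀) ξ‖ ≤ C * ‖(Φ s s₀) ξ‖

/-- Uniform bounded `h`-growth and `h`-decay on `I`: every solution satisfies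
`|x t| ≤ C |x s|` for `s ∈ I` and `t ∈ [s∗T^{∗-1}, s∗T] ∩ I`. -/
def UnifBoundedHGrowthDecay (J I : Set ℝ) (h hinv : ℝ → ℝ) (Φ : ℝ → ℝ → (E →L[ℝ] E)) : Prop :=
  ∃ T > estar hinv, ∃ C ≥ (1:ℝ), ∀ s₀ ∈ J, ∀ ξ : E, ∀ s ∈ I, ∀ t ∈ I,
    star h hinv s (sinv h hinv T) ≤ t → t ≤ star h hinv s T → ‖(Φ t s₀) ξ‖ ≤ C * ‖(Φ s s₀) ξ‖

/-- `Φ` is uniformly `h`-noncritical on `[e∗,∞)`: there are `T > e∗` and `θ ∈ (0,1)` with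
`|x t| ≤ θ · sup {|x u| : u ∈ J, |u ∗ t^{∗-1}|∗ ≤ T}` for all `t ≥ T`, for every solution. -/
def UnifHNoncritical (J : Set ℝ) (h hinv : ℝ → ℝ) (Φ : ℝ → ℝ → (E →L[ℝ] E)) : Prop :=
  ∃ T > estar hinv, ∃ θ : ℝ, 0 < θ ∧ θ < 1 ∧
    ∀ s₀ ∈ J, ∀ ξ : E, ∀ t, T ≤ t →
      ‖(Φ t s₀) ξ‖ ≤ θ * sSup ((fun u => ‖(Φ u s₀) ξ‖) ''
        {u | u ∈ J ∧ absStar h hinv (star h hinv u (sinv h hinv t)) ≤ T})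

/-- `Φ` is `h`-expansive on `I`: there are `L, β > 0` such that every solution satisfies
`|x t| ≤ L (h(t∗a^{∗-1})^{-β} |x a| + h(b∗t^{∗-1})^{-β} |x b|)` for `[a,b] ⊆ I`, `a ≤ t ≤ b`. -/
def HExpansive (J I : Set ℝ) (h hinv : ℝ → ℝ) (Φ : ℝ → ℝ → (E →L[ℝ] E)) : Prop :=
  ∃ L > (0:ℝ), ∃ β > (0:ℝ), ∀ s₀ ∈ J, ∀ ξ : E, ∀ a ∈ I, ∀ b ∈ I, ∀ t, a ≤ t → t ≤ b →
    ‖(Φ t s₀) ξ‖ ≤ L * ((h (star h hinv t (sinv h hinv a))) ^ (-β) * ‖(Φ a s₀) ξ‖ +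
      (h (star h hinv b (sinv h hinv t))) ^ (-β) * ‖(Φ b s₀) ξ‖)

lemma GrowthRate.upward {J : Set ℝ} {h hinv : ℝ → ℝ} (hgr : GrowthRate J h hinv)
    {x y : ℝ} (hx : x ∈ J) (hxy : x ≤ y) : y ∈ J := by
  rcases hgr.J_eq with ⟨a₀, rfl⟩ | rfl
  · exact lt_of_lt_of_le hx hxy
  · trivial

/-- The key iteration lemma for the forward direction. -/
lemma growth_iter {J I : Set ℝ} {h hinv : ℝ → ℝ} (hgr : GrowthRate J h hinv)
    (hIJ : I ⊆ J) (hIc : I.OrdConnected)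
    {E : Type*} [NormedAddCommGroup E] [NormedSpace ℝ E]
    (Φ : ℝ → ℝ → (E →L[ℝ] E)) (hΦ : IsEvolutionFamily J Φ)
    {T C : ℝ} (hTJ : T ∈ J) (hT1 : 1 ≤ h T) (hC : 1 ≤ C)
    (H : ∀ s₀ ∈ J, ∀ ξ : E, ∀ s ∈ I, ∀ t ∈ I, s ≤ t → t ≤ star h hinv s T →
      ‖(Φ t s₀) ξ‖ ≤ C * ‖(Φ s s₀) ξ‖) :
    ∀ n : ℕ, ∀ s ∈ I, ∀ t ∈ I, s ≤ t → h t ≤ h s * (h T) ^ (n + 1) →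
      ∀ ξ : E, ‖(Φ t s) ξ‖ ≤ C ^ (n + 1) * ‖ξ‖ := by
  have key : ∀ s ∈ I, ∀ t ∈ I, h t ≤ h s * h T → t ≤ star h hinv s T := by
    intro s hs t ht hle
    have hpos : (0:ℝ) < h s * h T :=
      mul_pos (hgr.pos s (hIJ hs)) (hgr.pos T hTJ)
    have hw : h (star h hinv s T) = h s * h T := hgr.inv_right _ hpos
    have hwJ : star h hinv s T ∈ J := hgr.inv_mem _ hpos
    by_contra hlt
    push_neg at hlt
    have := hgr.mono hwJ (hIJ ht) hlt
    rw [hw] at this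
    linarith
  intro n
  induction n with
  | zero =>
    intro s hs t ht hst hle ξ
    have h1 := H s (hIJ hs) ξ s hs t ht hst (key s hs t ht (by simpa using hle))
    rw [hΦ.1 s (hIJ hs)] at h1
    simpa using h1
  | succ n ih =>
    intro s hs t ht hst hle ξ
    have hTpos : 0 < h T := hgr.pos T hTJ
    by_cases hcase : h t ≤ h s * (h T) ^ (n + 1)
    · have := ih s hs t ht hst hcase ξ
      calc ‖(Φ t s) ξ‖ ≤ C ^ (n + 1) * ‖ξ‖ := this
        _ ≤ C ^ (n + 1 + 1) * ‖ξ‖ := by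
            apply mul_le_mul_of_nonneg_right _ (norm_nonneg _)
            exact pow_le_pow_right₀ hC (by omega)
    · push_neg at hcase
      set u := hinv (h s * (h T) ^ (n + 1)) with hu_def
      have hpos : (0:ℝ) < h s * (h T) ^ (n + 1) :=
        mul_pos (hgr.pos s (hIJ hs)) (pow_pos hTpos _)
      have huJ : u ∈ J := hgr.inv_mem _ hpos
      have hu : h u = h s * (h T) ^ (n + 1) := hgr.inv_right _ hpos
      have hT1n : 1 ≤ (h T) ^ (n + 1) := one_le_pow₀ hT1
      have hsu : s ≤ u := by
        by_contra hx
        push_neg at hx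
        have := hgr.mono huJ (hIJ hs) hx
        rw [hu] at this
        nlinarith [hgr.pos s (hIJ hs)]
      have hut : u ≤ t := by
        by_contra hx
        push_neg at hx
        have := hgr.mono (hIJ ht) huJ hx
        rw [hu] at this
        linarith
      have huI : u ∈ I := hIc.out hs ht ⟨hsu, hut⟩
      have b1 := ih s hs u huI hsu (le_of_eq hu) ξ
      have b2 := H s (hIJ hs) ξ u huI t ht hut
        (key u huI t ht (by rw [hu]; ring_nf; ring_nf at hle; linarith))
      calc ‖(Φ t s) ξ‖ ≤ C * ‖(Φ u s) ξ‖ := b2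
        _ ≤ C * (C ^ (n + 1) * ‖ξ‖) :=
            mul_le_mul_of_nonneg_left b1 (by linarith)
        _ = C ^ (n + 1 + 1) * ‖ξ‖ := by ring

/-- uniform bounded `h`-growth on `I` is equivalent to
`‖Φ(t,s)‖ ≤ K₀ (h t / h s)^β` for all `t ≥ s` in `I`, for some `K₀ ≥ 1`, `β ≥ 0`. -/
theorem statement2 {J I : Set ℝ} {h hinv : ℝ → ℝ} (hgr : GrowthRate J h hinv)
    (hIJ : I ⊆ J) (hIc : I.OrdConnected)
    {E : Type*} [NormedAddCommGroup E] [NormedSpace ℝ E] [FiniteDimensional ℝ E]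
    (Φ : ℝ → ℝ → (E →L[ℝ] E)) (hΦ : IsEvolutionFamily J Φ) :
    UnifBoundedHGrowth J I h hinv Φ ↔
      ∃ K₀ ≥ (1:ℝ), ∃ β ≥ (0:ℝ), ∀ s ∈ I, ∀ t ∈ I, s ≤ t →
        ‖Φ t s‖ ≤ K₀ * (h t / h s) ^ β := by
  have heJ : estar hinv ∈ J := hgr.inv_mem 1 (Set.mem_Ioi.mpr one_pos)
  have he : h (estar hinv) = 1 := hgr.inv_right 1 (Set.mem_Ioi.mpr one_pos)
  constructor
  · rintro ⟨T, hT, C, hC, H⟩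
    have hTJ : T ∈ J := hgr.upward heJ hT.le
    have hT1 : 1 < h T := by
      have := hgr.mono heJ hTJ hT
      rwa [he] at this
    have hTpos : (0:ℝ) < h T := by linarith
    have hlogT : 0 < Real.log (h T) := Real.log_pos hT1
    refine ⟨C, hC, Real.log C / Real.log (h T),
      div_nonneg (Real.log_nonneg hC) hlogT.le, ?_⟩
    intro s hs t ht hst
    have hspos : 0 < h s := hgr.pos s (hIJ hs)
    have htpos : 0 < h t := hgr.pos t (hIJ ht)
    have hsle : h s ≤ h t := hgr.mono.monotoneOn (hIJ hs) (hIJ ht) hst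
    set r : ℝ := h t / h s with hr_def
    have hr1 : 1 ≤ r := (one_le_div hspos).mpr hsle
    have hrpos : 0 < r := by linarith
    set n : ℕ := ⌊Real.logb (h T) r⌋₊ with hn_def
    have hlogb_nonneg : 0 ≤ Real.logb (h T) r := Real.logb_nonneg hT1 hr1
    -- r < (h T) ^ (n + 1)
    have hrlt : r ≤ (h T) ^ (n + 1) := by
      have h1 : Real.logb (h T) r < (n : ℝ) + 1 := by
        rw [hn_def]; exact Nat.lt_floor_add_one _
      have h2 : r = (h T) ^ (Real.logb (h T) r) :=
        (Real.rpow_logb hTpos (by linarith) hrpos).symm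
      have h3 : (h T) ^ (Real.logb (h T) r) ≤ (h T) ^ ((n : ℝ) + 1) :=
        Real.rpow_le_rpow_of_exponent_le hT1.le h1.le
      have h4 : (h T) ^ ((n : ℝ) + 1) = (h T) ^ (n + 1) := by
        rw [← Real.rpow_natCast (h T) (n + 1)]
        push_cast
        ring_nf
      rw [h2]
      rw [h4] at h3
      exact h3
    have hht : h t ≤ h s * (h T) ^ (n + 1) := by
      rw [hr_def, div_le_iff₀ hspos] at hrlt
      linarith
    have hbound : ‖Φ t s‖ ≤ C ^ (n + 1) := by
      apply ContinuousLinearMap.opNorm_le_bound _ (by positivity)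
      intro ξ
      exact growth_iter hgr hIJ hIc Φ hΦ hTJ hT1.le hC H n s hs t ht hst hht ξ
    refine hbound.trans ?_
    have hCpos : (0:ℝ) < C := by linarith
    have key : C ^ (n + 1) ≤ C * r ^ (Real.log C / Real.log (h T)) := by
      have e1 : (C:ℝ) ^ (n + 1) = C * C ^ ((n : ℝ)) := by
        rw [Real.rpow_natCast, pow_succ, mul_comm]
      rw [e1]
      apply mul_le_mul_of_nonneg_left _ hCpos.le
      have h5 : C ^ ((n : ℝ)) ≤ C ^ (Real.logb (h T) r) := by
        apply Real.rpow_le_rpow_of_exponent_le hC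
        exact Nat.floor_le hlogb_nonneg
      refine h5.trans_eq ?_
      rw [Real.rpow_def_of_pos hCpos, Real.rpow_def_of_pos hrpos, Real.logb]
      congr 1
      field_simp
    exact key
  · rintro ⟨K₀, hK₀, β, hβ, H⟩
    have hTJ : hinv 2 ∈ J := hgr.inv_mem 2 (Set.mem_Ioi.mpr two_pos)
    have hT2 : h (hinv 2) = 2 := hgr.inv_right 2 (Set.mem_Ioi.mpr two_pos)
    have heT : estar hinv < hinv 2 := by
      by_contra hx
      push_neg at hx
      rcases eq_or_lt_of_le hx with heq | hlt
      · rw [heq, he] at hT2; norm_num at hT2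
      · have := hgr.mono hTJ heJ hlt
        rw [he, hT2] at this; norm_num at this
    have h2β : (1:ℝ) ≤ (2:ℝ) ^ β := by
      have := Real.rpow_le_rpow_of_exponent_le (by norm_num : (1:ℝ) ≤ 2) hβ
      simpa using this
    refine ⟨hinv 2, heT, K₀ * (2:ℝ) ^ β, ?_, ?_⟩
    · nlinarith
    · intro s₀ hs₀ ξ s hs t ht hst htT
      have hspos : 0 < h s := hgr.pos s (hIJ hs)
      have htpos : 0 < h t := hgr.pos t (hIJ ht)
      have hwpos : (0:ℝ) < h s * h (hinv 2) := mul_pos hspos (by rw [hT2]; norm_num)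
      have hwJ : star h hinv s (hinv 2) ∈ J := hgr.inv_mem _ hwpos
      have hw : h (star h hinv s (hinv 2)) = h s * 2 := by
        have e : star h hinv s (hinv 2) = hinv (h s * h (hinv 2)) := rfl
        rw [e, hgr.inv_right _ (Set.mem_Ioi.mpr hwpos), hT2]
      have hht : h t ≤ h s * 2 := by
        have := hgr.mono.monotoneOn (hIJ ht) hwJ htT
        rwa [hw] at this
      have key : Φ t s₀ = Φ t s * Φ s s₀ :=
        (hΦ.2 t (hIJ ht) s (hIJ hs) s₀ hs₀).symm
      rw [key, ContinuousLinearMap.mul_apply]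
      calc ‖(Φ t s) ((Φ s s₀) ξ)‖ ≤ ‖Φ t s‖ * ‖(Φ s s₀) ξ‖ :=
            ContinuousLinearMap.le_opNorm _ _
        _ ≤ (K₀ * (h t / h s) ^ β) * ‖(Φ s s₀) ξ‖ := by
            apply mul_le_mul_of_nonneg_right (H s hs t ht hst) (norm_nonneg _)
        _ ≤ (K₀ * (2:ℝ) ^ β) * ‖(Φ s s₀) ξ‖ := by
            apply mul_le_mul_of_nonneg_right _ (norm_nonneg _)
            apply mul_le_mul_of_nonneg_left _ (by linarith)
            apply Real.rpow_le_rpow (by positivity) _ hβ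
            rw [div_le_iff₀ hspos]
            linarith
end
end

section
/- For any interval I ⊆ J, the evolution family Φ has uniform bounded h-decay on I if and only if there exist constants K₀ ≥ 1 and β ≥ 0 such that ‖Φ(t,s)‖ ≤ K₀·(h(s)/h(t))^β for all s ≥ t with t, s ∈ I. -/
open Set

noncomputable section

variable {E : Type*} [NormedAddCommGroup E] [NormedSpace ℝ E]

private lemma memJ_of_ge {J : Set ℝ} {h hinv : ℝ → ℝ} (hgr : GrowthRate J h hinv)
    {a b : ℝ} (ha : a ∈ J) (hab : a ≤ b) : b ∈ J := by
  rcases hgr.J_eq with ⟨a₀, rfl⟩ | rfl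
  · exact lt_of_lt_of_le ha hab
  · trivial

/-- uniform bounded `h`-decay on `I` is equivalent to
`‖Φ(t,s)‖ ≤ K₀ (h s / h t)^β` for all `s ≥ t` in `I`, for some `K₀ ≥ 1`, `β ≥ 0`. -/
theorem statement3 {J I : Set ℝ} {h hinv : ℝ → ℝ} (hgr : GrowthRate J h hinv)
    (hIJ : I ⊆ J) (hIc : I.OrdConnected)
    {E : Type*} [NormedAddCommGroup E] [NormedSpace ℝ E] [FiniteDimensional ℝ E]
    (Φ : ℝ → ℝ → (E →L[ℝ] E)) (hΦ : IsEvolutionFamily J Φ) :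
    UnifBoundedHDecay J I h hinv Φ ↔
      ∃ K₀ ≥ (1:ℝ), ∃ β ≥ (0:ℝ), ∀ t ∈ I, ∀ s ∈ I, t ≤ s →
        ‖Φ t s‖ ≤ K₀ * (h s / h t) ^ β := by
  obtain ⟨hId, hComp⟩ := hΦ
  have hIoi : ∀ x : ℝ, 0 < x → x ∈ Set.Ioi (0:ℝ) := fun x hx => Set.mem_Ioi.mpr hx
  have heJ : estar hinv ∈ J := hgr.inv_mem 1 (hIoi 1 one_pos)
  have heq : h (estar hinv) = 1 := hgr.inv_right 1 (hIoi 1 one_pos)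
  constructor
  · rintro ⟨T, hT, C, hC, hdec⟩
    have hTJ : T ∈ J := memJ_of_ge hgr heJ hT.le
    have hτ : 1 < h T := by
      have := (hgr.mono heJ hTJ hT)
      linarith [heq ▸ this]
    set τ := h T with hτdef
    have hτ0 : (0:ℝ) < τ := lt_trans one_pos hτ
    have hC0 : (0:ℝ) < C := lt_of_lt_of_le one_pos hC
    -- key computation : h (star s (sinv T)) = h s / τ  for s ∈ J
    have hsinvT : h (sinv h hinv T) = 1 / τ := by
      unfold sinv
      exact hgr.inv_right _ (hIoi _ (by positivity))
    have hstar : ∀ s ∈ J, h (star h hinv s (sinv h hinv T)) = h s / τ := by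
      intro s hs
      unfold _root_.star
      rw [hsinvT]
      have hp : 0 < h s * (1/τ) := by
        have := hgr.pos s hs
        positivity
      rw [hgr.inv_right _ (hIoi _ hp)]
      ring
    have hstarJ : ∀ s ∈ J, star h hinv s (sinv h hinv T) ∈ J := by
      intro s hs
      unfold _root_.star
      rw [hsinvT]
      have hps := hgr.pos s hs
      exact hgr.inv_mem _ (hIoi _ (by positivity))
    -- main iteration claim
    have claim : ∀ n : ℕ, ∀ t ∈ I, ∀ s ∈ I, t ≤ s → h s ≤ h t * τ ^ (n+1) →
        ∀ ξ : E, ‖(Φ t s) ξ‖ ≤ C ^ (n+1) * ‖ξ‖ := by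
      intro n
      induction n with
      | zero =>
        intro t ht s hs hts hle ξ
        have htJ := hIJ ht
        have hsJ := hIJ hs
        have hstep : star h hinv s (sinv h hinv T) ≤ t := by
          rw [← (hgr.mono.le_iff_le (hstarJ s hsJ) htJ)]
          rw [hstar s hsJ]
          rw [div_le_iff₀ hτ0]
          simpa using hle
        have := hdec s hsJ ξ s hs t ht hstep hts
        rw [hId s hsJ] at this
        simpa using this
      | succ n ih =>
        intro t ht s hs hts hle ξ
        have htJ := hIJ ht
        have hsJ := hIJ hs
        have hht : 0 < h t := hgr.pos t htJ
        by_cases hcase : h s ≤ h t * τ ^ (n+1)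
        · have h1 := ih t ht s hs hts hcase ξ
          have h2 : C ^ (n+1) ≤ C ^ (n+2) := pow_le_pow_right₀ hC (by omega)
          calc ‖(Φ t s) ξ‖ ≤ C ^ (n+1) * ‖ξ‖ := h1
            _ ≤ C ^ (n+1+1) * ‖ξ‖ := by
                apply mul_le_mul_of_nonneg_right _ (norm_nonneg ξ)
                exact h2
        · push_neg at hcase
          set u := hinv (h t * τ) with hudef
          have hpu : 0 < h t * τ := by positivity
          have huJ : u ∈ J := hgr.inv_mem _ hpu
          have hhu : h u = h t * τ := hgr.inv_right _ hpu
          have hτpow : τ ≤ τ ^ (n+1) := by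
            calc τ = τ ^ 1 := (pow_one τ).symm
              _ ≤ τ ^ (n+1) := pow_le_pow_right₀ hτ.le (by omega)
          have htu : t ≤ u := by
            rw [← (hgr.mono.le_iff_le htJ huJ), hhu]
            nlinarith
          have hus : u ≤ s := by
            rw [← (hgr.mono.le_iff_le huJ hsJ), hhu]
            nlinarith
          have huI : u ∈ I := hIc.out ht hs ⟨htu, hus⟩
          have hstaru : star h hinv u (sinv h hinv T) = t := by
            unfold _root_.star
            rw [hsinvT, hhu]
            have : h t * τ * (1/τ) = h t := by field_simp
            rw [this, hgr.inv_left t htJ]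
          have hstep := hdec s hsJ ξ u huI t ht (le_of_eq hstaru) htu
          have hIH : ‖(Φ u s) ξ‖ ≤ C ^ (n+1) * ‖ξ‖ := by
            apply ih u huI s hs hus _ ξ
            rw [hhu]
            calc h s ≤ h t * τ ^ (n+1+1) := hle
              _ = h t * τ * τ ^ (n+1) := by ring
          calc ‖(Φ t s) ξ‖ ≤ C * ‖(Φ u s) ξ‖ := hstep
            _ ≤ C * (C ^ (n+1) * ‖ξ‖) := by
                exact mul_le_mul_of_nonneg_left hIH hC0.le
            _ = C ^ (n+1+1) * ‖ξ‖ := by ring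
    -- assemble
    refine ⟨C, hC, Real.log C / Real.log τ, ?_, ?_⟩
    · apply div_nonneg (Real.log_nonneg hC) (Real.log_nonneg hτ.le)
    · intro t ht s hs hts
      set β := Real.log C / Real.log τ with hβdef
      have hβ0 : 0 ≤ β := div_nonneg (Real.log_nonneg hC) (Real.log_pos hτ).le
      have htJ := hIJ ht
      have hsJ := hIJ hs
      have hht : 0 < h t := hgr.pos t htJ
      have hhs : 0 < h s := hgr.pos s hsJ
      set r := h s / h t with hrdef
      have hr1 : 1 ≤ r := by
        rw [hrdef, le_div_iff₀ hht, one_mul]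
        exact hgr.mono.monotoneOn htJ hsJ hts
      have hr0 : 0 < r := lt_of_lt_of_le one_pos hr1
      -- find m with τ^m ≤ r < τ^(m+1)
      have hex : ∃ n : ℕ, r < τ ^ n := pow_unbounded_of_one_lt r hτ
      classical
      have hn0 : Nat.find hex ≠ 0 := by
        intro h0
        have := Nat.find_spec hex
        rw [h0, pow_zero] at this
        linarith
      set m := Nat.find hex - 1 with hmdef
      have hmeq : Nat.find hex = m + 1 := by omega
      have hn : r < τ ^ (m+1) := hmeq ▸ Nat.find_spec hex
      have hm : τ ^ m ≤ r := by
        have := Nat.find_min hex (show m < Nat.find hex by omega)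
        push_neg at this
        exact this
      -- τ^β = C
      have hτβ : τ ^ β = C := by
        rw [Real.rpow_def_of_pos hτ0, hβdef, mul_comm,
          div_mul_cancel₀ _ (ne_of_gt (Real.log_pos hτ))]
        exact Real.exp_log hC0
      have hCm : (C:ℝ) ^ m ≤ r ^ β := by
        calc (C:ℝ) ^ m = (τ ^ β) ^ m := by rw [hτβ]
          _ = τ ^ (β * m) := by
              rw [← Real.rpow_natCast (τ ^ β) m, ← Real.rpow_mul hτ0.le]
          _ = (τ ^ m) ^ β := by
              rw [← Real.rpow_natCast τ m, ← Real.rpow_mul hτ0.le, mul_comm]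
          _ ≤ r ^ β := Real.rpow_le_rpow (by positivity) hm hβ0
      have hopn : ‖Φ t s‖ ≤ C ^ (m+1) := by
        apply ContinuousLinearMap.opNorm_le_bound _ (by positivity)
        intro ξ
        apply claim m t ht s hs hts _ ξ
        rw [hrdef, div_lt_iff₀ hht] at hn
        linarith
      calc ‖Φ t s‖ ≤ C ^ (m+1) := hopn
        _ = C * C ^ m := by ring
        _ ≤ C * r ^ β := mul_le_mul_of_nonneg_left hCm hC0.le
  · rintro ⟨K₀, hK₀, β, hβ, hbd⟩
    refine ⟨hinv 2, ?_, K₀ * (2:ℝ) ^ β, ?_, ?_⟩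
    · have h2J : hinv 2 ∈ J := hgr.inv_mem 2 (hIoi 2 (by norm_num))
      have : h (estar hinv) < h (hinv 2) := by
        rw [heq, hgr.inv_right 2 (hIoi 2 (by norm_num))]; norm_num
      exact (hgr.mono.lt_iff_lt heJ h2J).mp this
    · have h2β : (1:ℝ) ≤ (2:ℝ) ^ β := Real.one_le_rpow (by norm_num) hβ
      nlinarith
    · intro s₀ hs₀ ξ s hs t ht hst hts
      have htJ := hIJ ht
      have hsJ := hIJ hs
      have hht : 0 < h t := hgr.pos t htJ
      have hhs : 0 < h s := hgr.pos s hsJ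
      have hT2 : h (hinv 2) = 2 := hgr.inv_right 2 (hIoi 2 (by norm_num))
      have hsinv2 : h (sinv h hinv (hinv 2)) = 1/2 := by
        unfold sinv
        rw [hT2]
        exact hgr.inv_right _ (hIoi _ (by norm_num))
      have hstar2 : h (star h hinv s (sinv h hinv (hinv 2))) = h s / 2 := by
        unfold _root_.star
        rw [hsinv2]
        rw [hgr.inv_right _ (hIoi _ (by positivity))]
        ring
      have hstar2J : star h hinv s (sinv h hinv (hinv 2)) ∈ J := by
        unfold _root_.star
        rw [hsinv2]
        exact hgr.inv_mem _ (hIoi _ (by positivity))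
      have hratio : h s / h t ≤ 2 := by
        have := hgr.mono.monotoneOn hstar2J htJ hst
        rw [hstar2] at this
        rw [div_le_iff₀ hht]
        linarith
      have hcomp : Φ t s * Φ s s₀ = Φ t s₀ := hComp t htJ s hsJ s₀ hs₀
      have hkey : (Φ t s₀) ξ = (Φ t s) ((Φ s s₀) ξ) := by
        rw [← hcomp]; rfl
      rw [hkey]
      calc ‖(Φ t s) ((Φ s s₀) ξ)‖ ≤ ‖Φ t s‖ * ‖(Φ s s₀) ξ‖ :=
            ContinuousLinearMap.le_opNorm _ _
        _ ≤ (K₀ * (h s / h t) ^ β) * ‖(Φ s s₀) ξ‖ := by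
            apply mul_le_mul_of_nonneg_right (hbd t ht s hs hts) (norm_nonneg _)
        _ ≤ (K₀ * (2:ℝ) ^ β) * ‖(Φ s s₀) ξ‖ := by
            apply mul_le_mul_of_nonneg_right _ (norm_nonneg _)
            apply mul_le_mul_of_nonneg_left _ (by linarith)
            exact Real.rpow_le_rpow (by positivity) hratio hβ
end
end

section
/- For any interval I ⊆ J, the evolution family Φ has uniform bounded h-growth and h-decay on I if and only if there exist constants K₀ ≥ 1 and β ≥ 0 such that ‖Φ(t,s)‖ ≤ K₀·h(|t∗s^{∗-1}|∗)^β for all t, s ∈ I. -/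
open Set

noncomputable section

variable {E : Type*} [NormedAddCommGroup E] [NormedSpace ℝ E]

namespace Statement4Aux

variable {J I : Set ℝ} {h hinv : ℝ → ℝ}

lemma estar_mem (hgr : GrowthRate J h hinv) : estar hinv ∈ J :=
  hgr.inv_mem 1 (Set.mem_Ioi.mpr one_pos)

lemma h_estar (hgr : GrowthRate J h hinv) : h (estar hinv) = 1 :=
  hgr.inv_right 1 (Set.mem_Ioi.mpr one_pos)

lemma mem_of_le (hgr : GrowthRate J h hinv) {x y : ℝ} (hx : x ∈ J) (hxy : x ≤ y) : y ∈ J := by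
  rcases hgr.J_eq with ⟨a, rfl⟩ | rfl
  · exact lt_of_lt_of_le hx hxy
  · trivial

lemma hinv_le_hinv (hgr : GrowthRate J h hinv) {a b : ℝ} (ha : 0 < a) (hb : 0 < b) :
    hinv a ≤ hinv b ↔ a ≤ b := by
  rw [← hgr.mono.le_iff_le (hgr.inv_mem a (Set.mem_Ioi.mpr ha)) (hgr.inv_mem b (Set.mem_Ioi.mpr hb)),
    hgr.inv_right a (Set.mem_Ioi.mpr ha), hgr.inv_right b (Set.mem_Ioi.mpr hb)]

lemma sinv_mem (hgr : GrowthRate J h hinv) {t : ℝ} (ht : t ∈ J) : sinv h hinv t ∈ J :=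
  hgr.inv_mem _ (Set.mem_Ioi.mpr (one_div_pos.2 (hgr.pos t ht)))

lemma h_sinv (hgr : GrowthRate J h hinv) {t : ℝ} (ht : t ∈ J) : h (sinv h hinv t) = 1 / h t :=
  hgr.inv_right _ (Set.mem_Ioi.mpr (one_div_pos.2 (hgr.pos t ht)))

lemma star_mem (hgr : GrowthRate J h hinv) {t s : ℝ} (ht : t ∈ J) (hs : s ∈ J) :
    star h hinv t s ∈ J :=
  hgr.inv_mem _ (Set.mem_Ioi.mpr (mul_pos (hgr.pos t ht) (hgr.pos s hs)))

lemma h_star (hgr : GrowthRate J h hinv) {t s : ℝ} (ht : t ∈ J) (hs : s ∈ J) :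
    h (star h hinv t s) = h t * h s :=
  hgr.inv_right _ (Set.mem_Ioi.mpr (mul_pos (hgr.pos t ht) (hgr.pos s hs)))

lemma le_star (hgr : GrowthRate J h hinv) {u T : ℝ} (hu : u ∈ J) (hT : T ∈ J)
    (h1 : 1 ≤ h T) : u ≤ star h hinv u T := by
  have hpu := hgr.pos u hu
  have : hinv (h u) ≤ hinv (h u * h T) :=
    (hinv_le_hinv hgr hpu (mul_pos hpu (lt_of_lt_of_le one_pos h1))).2
      (le_mul_of_one_le_right hpu.le h1)
  rwa [hgr.inv_left u hu] at this

lemma star_sinv_le (hgr : GrowthRate J h hinv) {u T : ℝ} (hu : u ∈ J) (hT : T ∈ J)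
    (h1 : 1 ≤ h T) : star h hinv u (sinv h hinv T) ≤ u := by
  have hpu := hgr.pos u hu
  have hpT := hgr.pos T hT
  have hs : h (sinv h hinv T) = 1 / h T := h_sinv hgr hT
  have hpos : 0 < h u * h (sinv h hinv T) := by
    rw [hs]; exact mul_pos hpu (one_div_pos.2 hpT)
  have : hinv (h u * h (sinv h hinv T)) ≤ hinv (h u) := by
    refine (hinv_le_hinv hgr hpos hpu).2 ?_
    rw [hs, mul_one_div]
    exact div_le_self hpu.le h1
  rwa [hgr.inv_left u hu] at this

lemma star_sinv_eq (hgr : GrowthRate J h hinv) {t s : ℝ} (ht : t ∈ J) (hs : s ∈ J) :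
    star h hinv t (sinv h hinv s) = hinv (h t / h s) := by
  unfold _root_.star sinv
  rw [hgr.inv_right (1 / h s) (Set.mem_Ioi.mpr (one_div_pos.2 (hgr.pos s hs))), mul_one_div]

lemma h_absStar (hgr : GrowthRate J h hinv) {t s : ℝ} (ht : t ∈ J) (hs : s ∈ J) :
    h (absStar h hinv (star h hinv t (sinv h hinv s))) = max (h t / h s) (h s / h t) := by
  have hpt := hgr.pos t ht
  have hps := hgr.pos s hs
  have hts : 0 < h t / h s := div_pos hpt hps
  have hst : 0 < h s / h t := div_pos hps hpt
  rw [star_sinv_eq hgr ht hs]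
  unfold absStar estar sinv
  rcases le_or_gt 1 (h t / h s) with h1 | h1
  · rw [if_pos ((hinv_le_hinv hgr one_pos hts).2 h1),
      hgr.inv_right _ (Set.mem_Ioi.mpr hts), max_eq_left]
    exact le_trans ((div_le_one hpt).2 ((one_le_div hps).1 h1)) h1
  · have h2 : ¬ (hinv 1 ≤ hinv (h t / h s)) := fun hle =>
      absurd ((hinv_le_hinv hgr one_pos hts).1 hle) (not_le.2 h1)
    rw [if_neg h2, hgr.inv_right _ (Set.mem_Ioi.mpr hts),
      hgr.inv_right _ (Set.mem_Ioi.mpr (one_div_pos.2 hts)), one_div_div, max_eq_right]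
    have h3 : 1 ≤ h s / h t := by
      rw [le_div_iff₀ hpt]
      nlinarith [(div_lt_one hps).1 h1]
    exact le_trans ((div_le_one hps).2 (by nlinarith [(div_lt_one hps).1 h1])) h3

variable {E : Type*} [NormedAddCommGroup E] [NormedSpace ℝ E]

lemma chain_growth (hgr : GrowthRate J h hinv) (hIJ : I ⊆ J) (hIc : I.OrdConnected)
    (Φ : ℝ → ℝ → (E →L[ℝ] E)) {T C : ℝ} (hTJ : T ∈ J) (hT1 : 1 < h T) (hC : 1 ≤ C)
    (hb : ∀ s₀ ∈ J, ∀ ξ : E, ∀ s ∈ I, ∀ t ∈ I,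
      star h hinv s (sinv h hinv T) ≤ t → t ≤ star h hinv s T →
        ‖(Φ t s₀) ξ‖ ≤ C * ‖(Φ s s₀) ξ‖)
    (s₀ : ℝ) (hs₀ : s₀ ∈ J) (ξ : E) (n : ℕ) :
    ∀ u ∈ I, ∀ t ∈ I, u ≤ t → h t ≤ h u * (h T) ^ n →
      ‖(Φ t s₀) ξ‖ ≤ C ^ n * ‖(Φ u s₀) ξ‖ := by
  induction n with
  | zero =>
    intro u hu t ht hut hle
    rw [pow_zero, mul_one] at hle
    have : u = t := hgr.mono.injOn (hIJ hu) (hIJ ht)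
      (le_antisymm (hgr.mono.monotoneOn (hIJ hu) (hIJ ht) hut) hle)
    rw [this, pow_zero, one_mul]
  | succ n ih =>
    intro u hu t ht hut hle
    have huJ := hIJ hu; have htJ := hIJ ht
    by_cases hcase : t ≤ star h hinv u T
    · have h1 : star h hinv u (sinv h hinv T) ≤ t :=
        le_trans (star_sinv_le hgr huJ hTJ hT1.le) hut
      calc ‖(Φ t s₀) ξ‖ ≤ C * ‖(Φ u s₀) ξ‖ := hb s₀ hs₀ ξ u hu t ht h1 hcase
        _ ≤ C ^ (n+1) * ‖(Φ u s₀) ξ‖ :=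
          mul_le_mul_of_nonneg_right (le_self_pow₀ hC (Nat.succ_ne_zero n)) (norm_nonneg _)
    · push_neg at hcase
      set v := star h hinv u T with hv
      have hvJ : v ∈ J := star_mem hgr huJ hTJ
      have hvh : h v = h u * h T := h_star hgr huJ hTJ
      have huv : u ≤ v := le_star hgr huJ hTJ hT1.le
      have hvt : v ≤ t := hcase.le
      have hvI : v ∈ I := hIc.out hu ht ⟨huv, hvt⟩
      have step : ‖(Φ v s₀) ξ‖ ≤ C * ‖(Φ u s₀) ξ‖ :=
        hb s₀ hs₀ ξ u hu v hvI (le_trans (star_sinv_le hgr huJ hTJ hT1.le) huv) le_rfl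
      have ihh : ‖(Φ t s₀) ξ‖ ≤ C ^ n * ‖(Φ v s₀) ξ‖ := by
        refine ih v hvI t ht hvt ?_
        rw [hvh]
        calc h t ≤ h u * (h T) ^ (n+1) := hle
          _ = h u * h T * (h T) ^ n := by ring
      calc ‖(Φ t s₀) ξ‖ ≤ C ^ n * ‖(Φ v s₀) ξ‖ := ihh
        _ ≤ C ^ n * (C * ‖(Φ u s₀) ξ‖) :=
          mul_le_mul_of_nonneg_left step (pow_nonneg (by linarith) n)
        _ = C ^ (n+1) * ‖(Φ u s₀) ξ‖ := by ring

lemma chain_decay (hgr : GrowthRate J h hinv) (hIJ : I ⊆ J) (hIc : I.OrdConnected)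
    (Φ : ℝ → ℝ → (E →L[ℝ] E)) {T C : ℝ} (hTJ : T ∈ J) (hT1 : 1 < h T) (hC : 1 ≤ C)
    (hb : ∀ s₀ ∈ J, ∀ ξ : E, ∀ s ∈ I, ∀ t ∈ I,
      star h hinv s (sinv h hinv T) ≤ t → t ≤ star h hinv s T →
        ‖(Φ t s₀) ξ‖ ≤ C * ‖(Φ s s₀) ξ‖)
    (s₀ : ℝ) (hs₀ : s₀ ∈ J) (ξ : E) (n : ℕ) :
    ∀ u ∈ I, ∀ t ∈ I, t ≤ u → h u ≤ h t * (h T) ^ n →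
      ‖(Φ t s₀) ξ‖ ≤ C ^ n * ‖(Φ u s₀) ξ‖ := by
  induction n with
  | zero =>
    intro u hu t ht htu hle
    rw [pow_zero, mul_one] at hle
    have : t = u := hgr.mono.injOn (hIJ ht) (hIJ hu)
      (le_antisymm (hgr.mono.monotoneOn (hIJ ht) (hIJ hu) htu) hle)
    rw [this, pow_zero, one_mul]
  | succ n ih =>
    intro u hu t ht htu hle
    have huJ := hIJ hu; have htJ := hIJ ht
    have hpT : 0 < h T := lt_trans one_pos hT1
    by_cases hcase : star h hinv u (sinv h hinv T) ≤ t
    · have h2 : t ≤ star h hinv u T := le_trans htu (le_star hgr huJ hTJ hT1.le)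
      calc ‖(Φ t s₀) ξ‖ ≤ C * ‖(Φ u s₀) ξ‖ := hb s₀ hs₀ ξ u hu t ht hcase h2
        _ ≤ C ^ (n+1) * ‖(Φ u s₀) ξ‖ :=
          mul_le_mul_of_nonneg_right (le_self_pow₀ hC (Nat.succ_ne_zero n)) (norm_nonneg _)
    · push_neg at hcase
      set v := star h hinv u (sinv h hinv T) with hv
      have hvJ : v ∈ J := star_mem hgr huJ (sinv_mem hgr hTJ)
      have hvh : h v = h u * (1 / h T) := by
        rw [hv, h_star hgr huJ (sinv_mem hgr hTJ), h_sinv hgr hTJ]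
      have htv : t ≤ v := hcase.le
      have hvu : v ≤ u := star_sinv_le hgr huJ hTJ hT1.le
      have hvI : v ∈ I := hIc.out ht hu ⟨htv, hvu⟩
      have step : ‖(Φ v s₀) ξ‖ ≤ C * ‖(Φ u s₀) ξ‖ :=
        hb s₀ hs₀ ξ u hu v hvI le_rfl (le_trans hvu (le_star hgr huJ hTJ hT1.le))
      have ihh : ‖(Φ t s₀) ξ‖ ≤ C ^ n * ‖(Φ v s₀) ξ‖ := by
        refine ih v hvI t ht htv ?_
        rw [hvh, mul_one_div, div_le_iff₀ hpT]
        calc h u ≤ h t * (h T) ^ (n+1) := hle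
          _ = h t * (h T) ^ n * h T := by ring
      calc ‖(Φ t s₀) ξ‖ ≤ C ^ n * ‖(Φ v s₀) ξ‖ := ihh
        _ ≤ C ^ n * (C * ‖(Φ u s₀) ξ‖) :=
          mul_le_mul_of_nonneg_left step (pow_nonneg (by linarith) n)
        _ = C ^ (n+1) * ‖(Φ u s₀) ξ‖ := by ring

end Statement4Aux

open Statement4Aux

/-- uniform bounded `h`-growth and `h`-decay on `I` is equivalent to
`‖Φ(t,s)‖ ≤ K₀ h(|t ∗ s^{∗-1}|∗)^β` for all `t, s ∈ I`, for some `K₀ ≥ 1`, `β ≥ 0`. -/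
theorem statement4 {J I : Set ℝ} {h hinv : ℝ → ℝ} (hgr : GrowthRate J h hinv)
    (hIJ : I ⊆ J) (hIc : I.OrdConnected)
    {E : Type*} [NormedAddCommGroup E] [NormedSpace ℝ E] [FiniteDimensional ℝ E]
    (Φ : ℝ → ℝ → (E →L[ℝ] E)) (hΦ : IsEvolutionFamily J Φ) :
    UnifBoundedHGrowthDecay J I h hinv Φ ↔
      ∃ K₀ ≥ (1:ℝ), ∃ β ≥ (0:ℝ), ∀ t ∈ I, ∀ s ∈ I,
        ‖Φ t s‖ ≤ K₀ * (h (absStar h hinv (star h hinv t (sinv h hinv s)))) ^ β := by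
  constructor
  · rintro ⟨T, hT, C, hC, hb⟩
    have hTJ : T ∈ J := mem_of_le hgr (estar_mem hgr) hT.le
    have hT1 : 1 < h T := by
      have := hgr.mono (estar_mem hgr) hTJ hT
      rwa [h_estar hgr] at this
    have hTpos : 0 < h T := lt_trans one_pos hT1
    have hC0 : 0 < C := lt_of_lt_of_le one_pos hC
    set β := Real.log C / Real.log (h T) with hβdef
    have hβ : 0 ≤ β := div_nonneg (Real.log_nonneg hC) (Real.log_pos hT1).le
    have hCβ : (h T) ^ β = C := by
      rw [Real.rpow_def_of_pos hTpos, hβdef, mul_comm,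
        div_mul_cancel₀ _ (ne_of_gt (Real.log_pos hT1)), Real.exp_log hC0]
    refine ⟨C, hC, β, hβ, ?_⟩
    intro t htI s hsI
    have hsJ := hIJ hsI; have htJ := hIJ htI
    have hps := hgr.pos s hsJ; have hpt := hgr.pos t htJ
    rw [h_absStar hgr htJ hsJ]
    have hpow_aux : ∀ D : ℝ, 1 ≤ D → ∀ n : ℕ, n = ⌈Real.logb (h T) D⌉₊ →
        C ^ n ≤ C * D ^ β := by
      intro D hD1 n hn
      have hDpos : 0 < D := lt_of_lt_of_le one_pos hD1
      rcases Nat.eq_zero_or_pos n with h0 | hpos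
      · rw [h0, pow_zero]
        have h1 : (1:ℝ) ≤ D ^ β := by
          calc (1:ℝ) = 1 ^ β := (Real.one_rpow β).symm
            _ ≤ D ^ β := Real.rpow_le_rpow zero_le_one hD1 hβ
        nlinarith
      · obtain ⟨m, rfl⟩ : ∃ m, n = m + 1 := ⟨n - 1, (Nat.succ_pred_eq_of_pos hpos).symm⟩
        have hm : (m : ℝ) < Real.logb (h T) D := by
          have : m < ⌈Real.logb (h T) D⌉₊ := by omega
          exact_mod_cast Nat.lt_ceil.1 this
        have hTm : (h T) ^ (m : ℝ) ≤ D := by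
          rw [← Real.rpow_logb hTpos hT1.ne' hDpos]
          exact le_of_lt ((Real.rpow_lt_rpow_left_iff hT1).2 hm)
        have hCm : C ^ m ≤ D ^ β := by
          have heq : C ^ m = ((h T) ^ (m : ℝ)) ^ β := by
            rw [← hCβ, ← Real.rpow_natCast ((h T) ^ β) m, ← Real.rpow_mul hTpos.le,
              mul_comm, Real.rpow_mul hTpos.le]
          rw [heq]
          exact Real.rpow_le_rpow (Real.rpow_nonneg hTpos.le _) hTm hβ
        calc C ^ (m + 1) = C * C ^ m := by ring
          _ ≤ C * D ^ β := mul_le_mul_of_nonneg_left hCm hC0.le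
    rcases le_total s t with hst | hts
    · have hhst : h s ≤ h t := hgr.mono.monotoneOn hsJ htJ hst
      set D := h t / h s with hD
      have hD1 : 1 ≤ D := (one_le_div hps).2 hhst
      have hDpos : 0 < D := lt_of_lt_of_le one_pos hD1
      have hmax : max (h t / h s) (h s / h t) = D :=
        max_eq_left (le_trans ((div_le_one hpt).2 hhst) hD1)
      rw [hmax]
      set n := ⌈Real.logb (h T) D⌉₊ with hn
      have hDn : D ≤ (h T) ^ n := by
        calc D = (h T) ^ Real.logb (h T) D := (Real.rpow_logb hTpos hT1.ne' hDpos).symm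
          _ ≤ (h T) ^ (n : ℝ) := (Real.rpow_le_rpow_left_iff hT1).2 (Nat.le_ceil _)
          _ = (h T) ^ n := Real.rpow_natCast _ n
      have key : ∀ ξ : E, ‖(Φ t s) ξ‖ ≤ C ^ n * ‖ξ‖ := by
        intro ξ
        have hcond : h t ≤ h s * (h T) ^ n := by
          rw [mul_comm]
          exact (div_le_iff₀ hps).1 hDn
        have := chain_growth hgr hIJ hIc Φ hTJ hT1 hC hb s hsJ ξ n s hsI t htI hst hcond
        simpa [hΦ.1 s hsJ] using this
      refine ContinuousLinearMap.opNorm_le_bound _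
        (mul_nonneg hC0.le (Real.rpow_nonneg hDpos.le β)) fun ξ => ?_
      calc ‖(Φ t s) ξ‖ ≤ C ^ n * ‖ξ‖ := key ξ
        _ ≤ (C * D ^ β) * ‖ξ‖ :=
          mul_le_mul_of_nonneg_right (hpow_aux D hD1 n hn) (norm_nonneg ξ)
    · have hhts : h t ≤ h s := hgr.mono.monotoneOn htJ hsJ hts
      set D := h s / h t with hD
      have hD1 : 1 ≤ D := (one_le_div hpt).2 hhts
      have hDpos : 0 < D := lt_of_lt_of_le one_pos hD1
      have hmax : max (h t / h s) (h s / h t) = D :=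
        max_eq_right (le_trans ((div_le_one hps).2 hhts) hD1)
      rw [hmax]
      set n := ⌈Real.logb (h T) D⌉₊ with hn
      have hDn : D ≤ (h T) ^ n := by
        calc D = (h T) ^ Real.logb (h T) D := (Real.rpow_logb hTpos hT1.ne' hDpos).symm
          _ ≤ (h T) ^ (n : ℝ) := (Real.rpow_le_rpow_left_iff hT1).2 (Nat.le_ceil _)
          _ = (h T) ^ n := Real.rpow_natCast _ n
      have key : ∀ ξ : E, ‖(Φ t s) ξ‖ ≤ C ^ n * ‖ξ‖ := by
        intro ξ
        have hcond : h s ≤ h t * (h T) ^ n := by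
          rw [mul_comm]
          exact (div_le_iff₀ hpt).1 hDn
        have := chain_decay hgr hIJ hIc Φ hTJ hT1 hC hb s hsJ ξ n s hsI t htI hts hcond
        simpa [hΦ.1 s hsJ] using this
      refine ContinuousLinearMap.opNorm_le_bound _
        (mul_nonneg hC0.le (Real.rpow_nonneg hDpos.le β)) fun ξ => ?_
      calc ‖(Φ t s) ξ‖ ≤ C ^ n * ‖ξ‖ := key ξ
        _ ≤ (C * D ^ β) * ‖ξ‖ :=
          mul_le_mul_of_nonneg_right (hpow_aux D hD1 n hn) (norm_nonneg ξ)
  · rintro ⟨K₀, hK₀, β, hβ, hbound⟩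
    have h2β : (1:ℝ) ≤ (2:ℝ) ^ β := by
      calc (1:ℝ) = 1 ^ β := (Real.one_rpow β).symm
        _ ≤ (2:ℝ) ^ β := Real.rpow_le_rpow zero_le_one one_le_two hβ
    refine ⟨hinv 2, ?_, K₀ * (2:ℝ) ^ β, by nlinarith, ?_⟩
    · show estar hinv < hinv 2
      have hne : hinv 1 ≠ hinv 2 := by
        intro heq
        have := congrArg h heq
        rw [hgr.inv_right 1 (Set.mem_Ioi.mpr one_pos),
          hgr.inv_right 2 (Set.mem_Ioi.mpr two_pos)] at this
        norm_num at this
      have hle : hinv 1 ≤ hinv 2 := (hinv_le_hinv hgr one_pos two_pos).2 one_le_two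
      exact lt_of_le_of_ne hle hne
    · intro s₀ hs₀ ξ s hsI t htI h1 h2
      have hsJ := hIJ hsI; have htJ := hIJ htI
      have hps := hgr.pos s hsJ; have hpt := hgr.pos t htJ
      set T := hinv 2 with hTdef
      have hTJ : T ∈ J := hgr.inv_mem 2 (Set.mem_Ioi.mpr two_pos)
      have hhT : h T = 2 := hgr.inv_right 2 (Set.mem_Ioi.mpr two_pos)
      have hup : h t ≤ 2 * h s := by
        have hm : h t ≤ h (star h hinv s T) :=
          hgr.mono.monotoneOn htJ (star_mem hgr hsJ hTJ) h2
        rwa [h_star hgr hsJ hTJ, hhT, mul_comm] at hm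
      have hlow : h s ≤ 2 * h t := by
        have hm : h (star h hinv s (sinv h hinv T)) ≤ h t :=
          hgr.mono.monotoneOn (star_mem hgr hsJ (sinv_mem hgr hTJ)) htJ h1
        rw [h_star hgr hsJ (sinv_mem hgr hTJ), h_sinv hgr hTJ, hhT] at hm
        nlinarith
      have hmax2 : max (h t / h s) (h s / h t) ≤ 2 := by
        refine max_le ?_ ?_
        · rw [div_le_iff₀ hps]; linarith
        · rw [div_le_iff₀ hpt]; linarith
      have hmaxnn : (0:ℝ) ≤ max (h t / h s) (h s / h t) :=
        le_max_of_le_left (div_pos hpt hps).le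
      have hop : ‖Φ t s‖ ≤ K₀ * (2:ℝ) ^ β := by
        refine le_trans (hbound t htI s hsI) ?_
        rw [h_absStar hgr htJ hsJ]
        exact mul_le_mul_of_nonneg_left
          (Real.rpow_le_rpow hmaxnn hmax2 hβ) (by linarith)
      have hcomp : (Φ t s₀) ξ = (Φ t s) ((Φ s s₀) ξ) := by
        rw [← hΦ.2 t htJ s hsJ s₀ hs₀]
        rfl
      rw [hcomp]
      calc ‖(Φ t s) ((Φ s s₀) ξ)‖ ≤ ‖Φ t s‖ * ‖(Φ s s₀) ξ‖ :=
          ContinuousLinearMap.le_opNorm _ _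
        _ ≤ (K₀ * (2:ℝ) ^ β) * ‖(Φ s s₀) ξ‖ :=
          mul_le_mul_of_nonneg_right hop (norm_nonneg _)
end
end

section
/- Let I ⊆ J be an interval unbounded above. Assume there exist constants K₀ ≥ 1 and β ≥ 0 such that ‖Φ(t,s)‖ ≤ K₀·h(|t∗s^{∗-1}|∗)^β for all t, s ∈ I, and that Φ has a uniform h-dichotomy on I with constants K ≥ 1 and α > 0. Then α ≤ β. -/
open Set

noncomputable section

variable {E : Type*} [NormedAddCommGroup E] [NormedSpace ℝ E]

private lemma hinv_mono {J : Set ℝ} {h hinv : ℝ → ℝ} (hgr : GrowthRate J h hinv)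
    {y₁ y₂ : ℝ} (h1 : 0 < y₁) (h2 : 0 < y₂) (hle : y₁ ≤ y₂) : hinv y₁ ≤ hinv y₂ := by
  by_contra hlt
  push_neg at hlt
  have := hgr.mono (hgr.inv_mem y₂ (Set.mem_Ioi.mpr h2)) (hgr.inv_mem y₁ (Set.mem_Ioi.mpr h1)) hlt
  rw [hgr.inv_right _ (Set.mem_Ioi.mpr h2), hgr.inv_right _ (Set.mem_Ioi.mpr h1)] at this
  linarith

private lemma habs_of_le {J : Set ℝ} {h hinv : ℝ → ℝ} (hgr : GrowthRate J h hinv)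
    {a b : ℝ} (ha : a ∈ J) (hb : b ∈ J) (hle : h b ≤ h a) :
    h (absStar h hinv (star h hinv a (sinv h hinv b))) = h a / h b := by
  have hbpos := hgr.pos b hb
  have hapos := hgr.pos a ha
  have hr : 0 < h a / h b := div_pos hapos hbpos
  have hr1 : (1:ℝ) ≤ h a / h b := (one_le_div hbpos).2 hle
  have hsinv : h (sinv h hinv b) = 1 / h b :=
    hgr.inv_right _ (Set.mem_Ioi.mpr (by positivity))
  have hstar : star h hinv a (sinv h hinv b) = hinv (h a / h b) := by
    unfold _root_.star; rw [hsinv, mul_one_div]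
  have hmono : hinv 1 ≤ hinv (h a / h b) := hinv_mono hgr one_pos hr hr1
  rw [hstar]
  unfold absStar estar
  rw [if_pos hmono]
  exact hgr.inv_right _ (Set.mem_Ioi.mpr hr)

private lemma habs_of_lt {J : Set ℝ} {h hinv : ℝ → ℝ} (hgr : GrowthRate J h hinv)
    {a b : ℝ} (ha : a ∈ J) (hb : b ∈ J) (hlt : h a < h b) :
    h (absStar h hinv (star h hinv a (sinv h hinv b))) = h b / h a := by
  have hbpos := hgr.pos b hb
  have hapos := hgr.pos a ha
  have hr : 0 < h a / h b := div_pos hapos hbpos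
  have hr1 : h a / h b < 1 := (div_lt_one hbpos).2 hlt
  have hsinv : h (sinv h hinv b) = 1 / h b :=
    hgr.inv_right _ (Set.mem_Ioi.mpr (by positivity))
  have hstar : star h hinv a (sinv h hinv b) = hinv (h a / h b) := by
    unfold _root_.star; rw [hsinv, mul_one_div]
  have hnot : ¬ (estar hinv ≤ hinv (h a / h b)) := by
    intro hle'
    have := hgr.mono.monotoneOn (hgr.inv_mem 1 (Set.mem_Ioi.mpr one_pos))
      (hgr.inv_mem _ (Set.mem_Ioi.mpr hr)) hle'
    rw [hgr.inv_right _ (Set.mem_Ioi.mpr one_pos), hgr.inv_right _ (Set.mem_Ioi.mpr hr)] at this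
    linarith
  rw [hstar]
  unfold absStar
  rw [if_neg hnot]
  unfold sinv
  rw [hgr.inv_right _ (Set.mem_Ioi.mpr hr),
    hgr.inv_right _ (Set.mem_Ioi.mpr (by positivity : (0:ℝ) < 1 / (h a / h b))),
    one_div_div]

/-- if `‖Φ(t,s)‖ ≤ K₀ h(|t∗s^{∗-1}|∗)^β` on an interval `I` unbounded above
and `Φ` has a uniform `h`-dichotomy on `I` with constants `K ≥ 1`, `α > 0`, then `α ≤ β`. -/
theorem statement5 {J I : Set ℝ} {h hinv : ℝ → ℝ} (hgr : GrowthRate J h hinv)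
    (hIJ : I ⊆ J) (hIc : I.OrdConnected) (hIunb : ∀ b : ℝ, ∃ t ∈ I, b < t)
    {E : Type*} [NormedAddCommGroup E] [NormedSpace ℝ E] [FiniteDimensional ℝ E] [Nontrivial E]
    (Φ : ℝ → ℝ → (E →L[ℝ] E)) (hΦ : IsEvolutionFamily J Φ)
    (K₀ β : ℝ) (hK₀ : 1 ≤ K₀) (hβ : 0 ≤ β)
    (hbd : ∀ t ∈ I, ∀ s ∈ I,
      ‖Φ t s‖ ≤ K₀ * (h (absStar h hinv (star h hinv t (sinv h hinv s)))) ^ β)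
    (K α : ℝ) (hK : 1 ≤ K) (hα : 0 < α)
    (P : ℝ → (E →L[ℝ] E)) (hUHD : HasUHDWith I h Φ P K α) :
    α ≤ β := by
  by_contra hcon
  push_neg at hcon
  obtain ⟨hP2, hPcomm, hPbd, hQbd⟩ := hUHD
  obtain ⟨s₀, hs₀, -⟩ := hIunb 0
  have hs₀J : s₀ ∈ J := hIJ hs₀
  have hs₀pos : 0 < h s₀ := hgr.pos s₀ hs₀J
  have hKK₀ : (0:ℝ) < K * K₀ := by positivity
  set M : ℝ := (K * K₀) ^ ((α - β)⁻¹) with hM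
  have hMpos : 0 < M := Real.rpow_pos_of_pos hKK₀ _
  obtain ⟨t, ht, htgt⟩ := hIunb (max (hinv (h s₀ * (M + 1))) s₀)
  have htJ : t ∈ J := hIJ ht
  have hc : 0 < h s₀ * (M + 1) := by positivity
  have hu : h (hinv (h s₀ * (M + 1))) = h s₀ * (M + 1) :=
    hgr.inv_right _ (Set.mem_Ioi.mpr hc)
  have hs₀t : s₀ < t := lt_of_le_of_lt (le_max_right _ _) htgt
  have hht : h s₀ * (M + 1) < h t := by
    rw [← hu]
    exact hgr.mono (hgr.inv_mem _ (Set.mem_Ioi.mpr hc)) htJ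
      (lt_of_le_of_lt (le_max_left _ _) htgt)
  have hhlt : h s₀ < h t := hgr.mono hs₀J htJ hs₀t
  set r : ℝ := h t / h s₀ with hrdef
  have hrpos : 0 < r := div_pos (hgr.pos t htJ) hs₀pos
  have hrM : M < r := by
    rw [hrdef, lt_div_iff₀ hs₀pos]
    nlinarith
  -- norm bounds from hbd
  have hb1 : ‖Φ t s₀‖ ≤ K₀ * r ^ β := by
    have := hbd t ht s₀ hs₀
    rwa [habs_of_le hgr htJ hs₀J hhlt.le] at this
  have hb2 : ‖Φ s₀ t‖ ≤ K₀ * r ^ β := by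
    have := hbd s₀ hs₀ t ht
    rwa [habs_of_lt hgr hs₀J htJ hhlt] at this
  have hcomp : Φ s₀ t * Φ t s₀ = 1 := by
    rw [hΦ.2 s₀ hs₀J t htJ s₀ hs₀J, hΦ.1 s₀ hs₀J]
  have hrβ : (0:ℝ) ≤ r ^ β := (Real.rpow_pos_of_pos hrpos β).le
  have hrα : (0:ℝ) ≤ r ^ (-α) := (Real.rpow_pos_of_pos hrpos (-α)).le
  have key : (1:ℝ) ≤ K * K₀ * r ^ (β - α) := by
    have hmul : K₀ * r ^ β * (K * r ^ (-α)) = K * K₀ * r ^ (β - α) := by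
      rw [show β - α = β + (-α) by ring, Real.rpow_add hrpos]
      ring
    by_cases hP0 : P s₀ = 0
    · have hid : (Φ s₀ t * (1 - P t)) * Φ t s₀ = 1 := by
        rw [mul_assoc, sub_mul, one_mul, hPcomm t ht s₀ hs₀, hP0, mul_zero, sub_zero, hcomp]
      have h1 : (1:ℝ) = ‖(Φ s₀ t * (1 - P t)) * Φ t s₀‖ := by rw [hid, norm_one]
      have h2 : ‖(Φ s₀ t * (1 - P t)) * Φ t s₀‖ ≤ (K * r ^ (-α)) * (K₀ * r ^ β) :=
        le_trans (norm_mul_le _ _)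
          (mul_le_mul (hQbd t ht s₀ hs₀ hs₀t.le) hb1 (norm_nonneg _) (by positivity))
      calc (1:ℝ) ≤ (K * r ^ (-α)) * (K₀ * r ^ β) := h1 ▸ h2
        _ = K * K₀ * r ^ (β - α) := by rw [← hmul]; ring
    · have hPn : (1:ℝ) ≤ ‖P s₀‖ := by
        have h2 : ‖P s₀‖ ≤ ‖P s₀‖ * ‖P s₀‖ := by
          conv_lhs => rw [← hP2 s₀ hs₀]
          exact norm_mul_le _ _
        have h3 : 0 < ‖P s₀‖ := norm_pos_iff.mpr hP0
        nlinarith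
      have hid : Φ s₀ t * (Φ t s₀ * P s₀) = P s₀ := by
        rw [← mul_assoc, hcomp, one_mul]
      have h2 : ‖P s₀‖ ≤ (K₀ * r ^ β) * (K * r ^ (-α)) := by
        rw [← hid]
        exact le_trans (norm_mul_le _ _)
          (mul_le_mul hb2 (hPbd s₀ hs₀ t ht hs₀t.le) (norm_nonneg _) (by positivity))
      calc (1:ℝ) ≤ (K₀ * r ^ β) * (K * r ^ (-α)) := le_trans hPn h2
        _ = K * K₀ * r ^ (β - α) := hmul
  -- derive contradiction
  have hαβ : 0 < α - β := sub_pos.2 hcon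
  have hMpow : M ^ (α - β) = K * K₀ := by
    rw [hM, ← Real.rpow_mul hKK₀.le, inv_mul_cancel₀ (ne_of_gt hαβ), Real.rpow_one]
  have hrpow : K * K₀ < r ^ (α - β) := by
    rw [← hMpow]
    exact Real.rpow_lt_rpow hMpos.le hrM hαβ
  have hpowpos : 0 < r ^ (α - β) := Real.rpow_pos_of_pos hrpos _
  rw [show β - α = -(α - β) by ring, Real.rpow_neg hrpos.le, ← div_eq_mul_inv] at key
  have := (one_le_div hpowpos).mp key
  linarith
end
end

section
/- Let I ⊆ J be an interval and fix t₀ ∈ J. The evolution family Φ has a uniform h-dichotomy on I if and only if there exist an n×n real matrix P with P² = P and constants K ≥ 1, α > 0 such that ‖Φ(t,t₀)·P·Φ(t₀,s)‖ ≤ K·(h(t)/h(s))^{-α} for all t ≥ s with t, s ∈ I, and ‖Φ(t,t₀)·(I − P)·Φ(t₀,s)‖ ≤ K·(h(s)/h(t))^{-α} for all t ≤ s with t, s ∈ I. -/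
open Set

noncomputable section

variable {E : Type*} [NormedAddCommGroup E] [NormedSpace ℝ E]

/-- `Φ` has a uniform `h`-dichotomy on `I` iff there is a constant
projection `P` and constants `K ≥ 1`, `α > 0` with
`‖Φ(t,t₀) P Φ(t₀,s)‖ ≤ K (h t / h s)^{-α}` for `t ≥ s` in `I` and
`‖Φ(t,t₀) (I-P) Φ(t₀,s)‖ ≤ K (h s / h t)^{-α}` for `t ≤ s` in `I`. -/
theorem statement6 {J I : Set ℝ} {h hinv : ℝ → ℝ} (hgr : GrowthRate J h hinv)
    (hIJ : I ⊆ J) (hIc : I.OrdConnected)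
    {E : Type*} [NormedAddCommGroup E] [NormedSpace ℝ E] [FiniteDimensional ℝ E]
    (Φ : ℝ → ℝ → (E →L[ℝ] E)) (hΦ : IsEvolutionFamily J Φ)
    (t₀ : ℝ) (ht₀ : t₀ ∈ J) :
    HasUHD I h Φ ↔
      ∃ P : E →L[ℝ] E, P * P = P ∧ ∃ K ≥ (1:ℝ), ∃ α > (0:ℝ),
        (∀ s ∈ I, ∀ t ∈ I, s ≤ t →
          ‖Φ t t₀ * P * Φ t₀ s‖ ≤ K * (h t / h s) ^ (-α)) ∧
        (∀ s ∈ I, ∀ t ∈ I, t ≤ s →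
          ‖Φ t t₀ * (1 - P) * Φ t₀ s‖ ≤ K * (h s / h t) ^ (-α)) := by
  obtain ⟨hid', hco⟩ := hΦ
  have hid : ∀ a ∈ J, ∀ b ∈ J, Φ a b * Φ b a = 1 := by
    intro a ha b hb
    rw [hco a ha b hb a ha, hid' a ha]
  rcases I.eq_empty_or_nonempty with hIe | ⟨t₁, ht₁⟩
  · subst hIe
    constructor
    · intro _
      exact ⟨1, one_mul 1, 1, le_refl 1, 1, one_pos,
        fun s hs => absurd hs (notMem_empty s),
        fun s hs => absurd hs (notMem_empty s)⟩
    · intro _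
      exact ⟨1, le_refl 1, 1, one_pos, fun _ => 0,
        fun t ht => absurd ht (notMem_empty t),
        fun t ht => absurd ht (notMem_empty t),
        fun s hs => absurd hs (notMem_empty s),
        fun s hs => absurd hs (notMem_empty s)⟩
  · have ht₁J : t₁ ∈ J := hIJ ht₁
    constructor
    · rintro ⟨K, hK, α, hα, P, hP2, hPcomm, hbd1, hbd2⟩
      have hkey : ∀ s ∈ I, ∀ t ∈ I,
          Φ t t₀ * (Φ t₀ t₁ * P t₁ * Φ t₁ t₀) * Φ t₀ s = Φ t s * P s := by
        intro s hs t ht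
        calc Φ t t₀ * (Φ t₀ t₁ * P t₁ * Φ t₁ t₀) * Φ t₀ s
            = (Φ t t₀ * Φ t₀ t₁) * (P t₁ * (Φ t₁ t₀ * Φ t₀ s)) := by noncomm_ring
          _ = Φ t t₁ * (P t₁ * Φ t₁ s) := by
              rw [hco t (hIJ ht) t₀ ht₀ t₁ ht₁J, hco t₁ ht₁J t₀ ht₀ s (hIJ hs)]
          _ = Φ t t₁ * (Φ t₁ s * P s) := by rw [hPcomm t₁ ht₁ s hs]
          _ = (Φ t t₁ * Φ t₁ s) * P s := by noncomm_ring
          _ = Φ t s * P s := by rw [hco t (hIJ ht) t₁ ht₁J s (hIJ hs)]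
      refine ⟨Φ t₀ t₁ * P t₁ * Φ t₁ t₀, ?_, K, hK, α, hα, ?_, ?_⟩
      · have e1 : Φ t₁ t₀ * Φ t₀ t₁ = 1 := hid t₁ ht₁J t₀ ht₀
        calc (Φ t₀ t₁ * P t₁ * Φ t₁ t₀) * (Φ t₀ t₁ * P t₁ * Φ t₁ t₀)
            = Φ t₀ t₁ * (P t₁ * ((Φ t₁ t₀ * Φ t₀ t₁) * P t₁)) * Φ t₁ t₀ := by
              noncomm_ring
          _ = Φ t₀ t₁ * (P t₁ * P t₁) * Φ t₁ t₀ := by rw [e1, one_mul]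
          _ = Φ t₀ t₁ * P t₁ * Φ t₁ t₀ := by rw [hP2 t₁ ht₁, mul_assoc]
      · intro s hs t ht hst
        rw [hkey s hs t ht]
        exact hbd1 s hs t ht hst
      · intro s hs t ht hts
        have : Φ t t₀ * (1 - (Φ t₀ t₁ * P t₁ * Φ t₁ t₀)) * Φ t₀ s
            = Φ t s * (1 - P s) := by
          calc Φ t t₀ * (1 - (Φ t₀ t₁ * P t₁ * Φ t₁ t₀)) * Φ t₀ s
              = Φ t t₀ * Φ t₀ s - Φ t t₀ * (Φ t₀ t₁ * P t₁ * Φ t₁ t₀) * Φ t₀ s := by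
                noncomm_ring
            _ = Φ t s - Φ t s * P s := by
                rw [hkey s hs t ht, hco t (hIJ ht) t₀ ht₀ s (hIJ hs)]
            _ = Φ t s * (1 - P s) := by noncomm_ring
        rw [this]
        exact hbd2 s hs t ht hts
    · rintro ⟨P, hP2, K, hK, α, hα, hb1, hb2⟩
      refine ⟨K, hK, α, hα, fun s => Φ s t₀ * P * Φ t₀ s, ?_, ?_, ?_, ?_⟩
      · intro t ht
        have e1 : Φ t₀ t * Φ t t₀ = 1 := hid t₀ ht₀ t (hIJ ht)
        calc (Φ t t₀ * P * Φ t₀ t) * (Φ t t₀ * P * Φ t₀ t)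
            = Φ t t₀ * (P * ((Φ t₀ t * Φ t t₀) * P)) * Φ t₀ t := by noncomm_ring
          _ = Φ t t₀ * (P * P) * Φ t₀ t := by rw [e1, one_mul]
          _ = Φ t t₀ * P * Φ t₀ t := by rw [hP2, mul_assoc]
      · intro t ht s hs
        calc (Φ t t₀ * P * Φ t₀ t) * Φ t s
            = Φ t t₀ * P * (Φ t₀ t * Φ t s) := by noncomm_ring
          _ = Φ t t₀ * P * Φ t₀ s := by rw [hco t₀ ht₀ t (hIJ ht) s (hIJ hs)]
          _ = (Φ t s * Φ s t₀) * P * Φ t₀ s := by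
              rw [hco t (hIJ ht) s (hIJ hs) t₀ ht₀]
          _ = Φ t s * (Φ s t₀ * P * Φ t₀ s) := by noncomm_ring
      · intro s hs t ht hst
        have : Φ t s * (Φ s t₀ * P * Φ t₀ s) = Φ t t₀ * P * Φ t₀ s := by
          calc Φ t s * (Φ s t₀ * P * Φ t₀ s)
              = (Φ t s * Φ s t₀) * P * Φ t₀ s := by noncomm_ring
            _ = Φ t t₀ * P * Φ t₀ s := by rw [hco t (hIJ ht) s (hIJ hs) t₀ ht₀]
        rw [this]
        exact hb1 s hs t ht hst
      · intro s hs t ht hts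
        have : Φ t s * (1 - (Φ s t₀ * P * Φ t₀ s)) = Φ t t₀ * (1 - P) * Φ t₀ s := by
          calc Φ t s * (1 - (Φ s t₀ * P * Φ t₀ s))
              = Φ t s - (Φ t s * Φ s t₀) * P * Φ t₀ s := by noncomm_ring
            _ = Φ t t₀ * Φ t₀ s - Φ t t₀ * P * Φ t₀ s := by
                rw [hco t (hIJ ht) s (hIJ hs) t₀ ht₀, hco t (hIJ ht) t₀ ht₀ s (hIJ hs)]
            _ = Φ t t₀ * (1 - P) * Φ t₀ s := by noncomm_ring
        rw [this]
        exact hb2 s hs t ht hts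
end
end

section
/- Let I ⊆ J be an interval and fix t₀ ∈ J. The evolution family Φ has a uniform h-dichotomy on I if and only if there exist an n×n real matrix P with P² = P and positive constants K₁, K₂, M, α such that for every ξ ∈ ℝⁿ: (a) |Φ(t,t₀)Pξ| ≤ K₁·(h(t)/h(s))^{-α}·|Φ(s,t₀)Pξ| for all t ≥ s with t, s ∈ I; (b) |Φ(t,t₀)(I − P)ξ| ≤ K₂·(h(s)/h(t))^{-α}·|Φ(s,t₀)(I − P)ξ| for all t ≤ s with t, s ∈ I; and (c) ‖Φ(t,t₀)·P·Φ(t₀,t)‖ ≤ M for all t ∈ I. -/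
open Set

noncomputable section

variable {E : Type*} [NormedAddCommGroup E] [NormedSpace ℝ E]

private lemma aux_mul {R : Type*} [Ring R] {b q p c : R} (h1 : b * q = p * b)
    (h2 : p * p = p) : (c * b) * q = (c * p) * (b * q) := by
  calc (c * b) * q = c * (p * b) := by rw [mul_assoc, h1]
    _ = c * (p * (p * b)) := by rw [← mul_assoc p p b, h2]
    _ = (c * p) * (b * q) := by rw [← h1, ← mul_assoc]

/-- `Φ` has a uniform `h`-dichotomy on `I` iff there are a constant
projection `P` and positive constants `K₁, K₂, M, α` such that for every `ξ`:
(a) `|Φ(t,t₀)Pξ| ≤ K₁ (h t / h s)^{-α} |Φ(s,t₀)Pξ|` for `t ≥ s` in `I`;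
(b) `|Φ(t,t₀)(I-P)ξ| ≤ K₂ (h s / h t)^{-α} |Φ(s,t₀)(I-P)ξ|` for `t ≤ s` in `I`;
(c) `‖Φ(t,t₀) P Φ(t₀,t)‖ ≤ M` for `t ∈ I`. -/
theorem statement7 {J I : Set ℝ} {h hinv : ℝ → ℝ} (hgr : GrowthRate J h hinv)
    (hIJ : I ⊆ J) (hIc : I.OrdConnected)
    {E : Type*} [NormedAddCommGroup E] [NormedSpace ℝ E] [FiniteDimensional ℝ E]
    (Φ : ℝ → ℝ → (E →L[ℝ] E)) (hΦ : IsEvolutionFamily J Φ)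
    (t₀ : ℝ) (ht₀ : t₀ ∈ J) :
    HasUHD I h Φ ↔
      ∃ P : E →L[ℝ] E, P * P = P ∧ ∃ K₁ > (0:ℝ), ∃ K₂ > (0:ℝ), ∃ M > (0:ℝ), ∃ α > (0:ℝ),
        (∀ ξ : E, ∀ s ∈ I, ∀ t ∈ I, s ≤ t →
          ‖(Φ t t₀ * P) ξ‖ ≤ K₁ * (h t / h s) ^ (-α) * ‖(Φ s t₀ * P) ξ‖) ∧
        (∀ ξ : E, ∀ s ∈ I, ∀ t ∈ I, t ≤ s →
          ‖(Φ t t₀ * (1 - P)) ξ‖ ≤ K₂ * (h s / h t) ^ (-α) * ‖(Φ s t₀ * (1 - P)) ξ‖) ∧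
        (∀ t ∈ I, ‖Φ t t₀ * P * Φ t₀ t‖ ≤ M) := by
  obtain ⟨hid, hcomp⟩ := hΦ
  constructor
  · rintro ⟨K, hK, α, hα, P, hP2, hPcomm, hb1, hb2⟩
    rcases I.eq_empty_or_nonempty with hIe | ⟨t₁, ht₁⟩
    · exact ⟨0, by simp, 1, one_pos, 1, one_pos, 1, one_pos, 1, one_pos,
        by simp [hIe], by simp [hIe], by simp [hIe]⟩
    have hK0 : (0:ℝ) < K := by linarith
    have ht₁J : t₁ ∈ J := hIJ ht₁
    set Q : E →L[ℝ] E := Φ t₀ t₁ * P t₁ * Φ t₁ t₀ with hQdef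
    have hinv11 : Φ t₁ t₀ * Φ t₀ t₁ = 1 := by
      rw [hcomp t₁ ht₁J t₀ ht₀ t₁ ht₁J, hid t₁ ht₁J]
    have hQ2 : Q * Q = Q := by
      simp only [hQdef, mul_assoc]
      rw [← mul_assoc (Φ t₁ t₀), hinv11, one_mul, ← mul_assoc (P t₁) (P t₁), hP2 t₁ ht₁]
    have heq : ∀ t ∈ I, Φ t t₀ * Q = P t * Φ t t₀ := by
      intro t ht
      have htJ : t ∈ J := hIJ ht
      calc Φ t t₀ * Q = ((Φ t t₀ * Φ t₀ t₁) * P t₁) * Φ t₁ t₀ := by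
            simp only [hQdef, mul_assoc]
        _ = (Φ t t₁ * P t₁) * Φ t₁ t₀ := by rw [hcomp t htJ t₀ ht₀ t₁ ht₁J]
        _ = (P t * Φ t t₁) * Φ t₁ t₀ := by rw [← hPcomm t ht t₁ ht₁]
        _ = P t * Φ t t₀ := by rw [mul_assoc, hcomp t htJ t₁ ht₁J t₀ ht₀]
    have heq' : ∀ t ∈ I, Φ t t₀ * (1 - Q) = (1 - P t) * Φ t t₀ := by
      intro t ht
      rw [mul_sub, mul_one, sub_mul, one_mul, heq t ht]
    have hPnorm : ∀ t ∈ I, ‖P t‖ ≤ K := by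
      intro t ht
      have htJ : t ∈ J := hIJ ht
      have := hb1 t ht t ht le_rfl
      rwa [hid t htJ, one_mul, div_self (ne_of_gt (hgr.pos t htJ)), Real.one_rpow,
        mul_one] at this
    refine ⟨Q, hQ2, K, hK0, K, hK0, K, hK0, α, hα, ?_, ?_, ?_⟩
    · intro ξ s hs t ht hst
      have hsJ : s ∈ J := hIJ hs
      have htJ : t ∈ J := hIJ ht
      have key : Φ t t₀ * Q = (Φ t s * P s) * (Φ s t₀ * Q) := by
        rw [← hcomp t htJ s hsJ t₀ ht₀]
        exact aux_mul (heq s hs) (hP2 s hs)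
      calc ‖(Φ t t₀ * Q) ξ‖ = ‖(Φ t s * P s) ((Φ s t₀ * Q) ξ)‖ := by
            rw [key, ContinuousLinearMap.mul_apply]
        _ ≤ ‖Φ t s * P s‖ * ‖(Φ s t₀ * Q) ξ‖ := ContinuousLinearMap.le_opNorm _ _
        _ ≤ K * (h t / h s) ^ (-α) * ‖(Φ s t₀ * Q) ξ‖ :=
            mul_le_mul_of_nonneg_right (hb1 s hs t ht hst) (norm_nonneg _)
    · intro ξ s hs t ht hts
      have hsJ : s ∈ J := hIJ hs
      have htJ : t ∈ J := hIJ ht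
      have h1mP2 : (1 - P s) * (1 - P s) = 1 - P s := by
        rw [mul_sub, mul_one, sub_mul, one_mul, hP2 s hs, sub_self, sub_zero]
      have key : Φ t t₀ * (1 - Q) = (Φ t s * (1 - P s)) * (Φ s t₀ * (1 - Q)) := by
        rw [← hcomp t htJ s hsJ t₀ ht₀]
        exact aux_mul (heq' s hs) h1mP2
      calc ‖(Φ t t₀ * (1 - Q)) ξ‖ = ‖(Φ t s * (1 - P s)) ((Φ s t₀ * (1 - Q)) ξ)‖ := by
            rw [key, ContinuousLinearMap.mul_apply]
        _ ≤ ‖Φ t s * (1 - P s)‖ * ‖(Φ s t₀ * (1 - Q)) ξ‖ := ContinuousLinearMap.le_opNorm _ _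
        _ ≤ K * (h s / h t) ^ (-α) * ‖(Φ s t₀ * (1 - Q)) ξ‖ :=
            mul_le_mul_of_nonneg_right (hb2 s hs t ht hts) (norm_nonneg _)
    · intro t ht
      have htJ : t ∈ J := hIJ ht
      have : Φ t t₀ * Q * Φ t₀ t = P t := by
        rw [heq t ht, mul_assoc, hcomp t htJ t₀ ht₀ t htJ, hid t htJ, mul_one]
      rw [this]
      exact hPnorm t ht
  · rintro ⟨P, hP2, K₁, hK₁, K₂, hK₂, M, hM, α, hα, ha, hb, hc⟩
    set K : ℝ := 1 + K₁ * M + K₂ * (1 + M) with hKdef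
    have hKM1 : K₁ * M ≤ K := by nlinarith
    have hKM2 : K₂ * (1 + M) ≤ K := by nlinarith
    have hK1 : (1:ℝ) ≤ K := by nlinarith
    refine ⟨K, hK1, α, hα, fun t => Φ t t₀ * P * Φ t₀ t, ?_, ?_, ?_, ?_⟩
    · intro t ht
      have htJ : t ∈ J := hIJ ht
      have hinv' : Φ t₀ t * Φ t t₀ = 1 := by
        rw [hcomp t₀ ht₀ t htJ t₀ ht₀, hid t₀ ht₀]
      simp only [mul_assoc]
      rw [← mul_assoc (Φ t₀ t) (Φ t t₀), hinv', one_mul, ← mul_assoc P P, hP2]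
    · intro t ht s hs
      have htJ : t ∈ J := hIJ ht
      have hsJ : s ∈ J := hIJ hs
      calc (Φ t t₀ * P * Φ t₀ t) * Φ t s = Φ t t₀ * (P * (Φ t₀ t * Φ t s)) := by
            simp only [mul_assoc]
        _ = Φ t t₀ * (P * Φ t₀ s) := by rw [hcomp t₀ ht₀ t htJ s hsJ]
        _ = (Φ t s * Φ s t₀) * (P * Φ t₀ s) := by rw [hcomp t htJ s hsJ t₀ ht₀]
        _ = Φ t s * (Φ s t₀ * P * Φ t₀ s) := by simp only [mul_assoc]
    · intro s hs t ht hst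
      have hsJ : s ∈ J := hIJ hs
      have htJ : t ∈ J := hIJ ht
      have hfac : (0:ℝ) < (h t / h s) ^ (-α) :=
        Real.rpow_pos_of_pos (div_pos (hgr.pos t htJ) (hgr.pos s hsJ)) _
      apply ContinuousLinearMap.opNorm_le_bound _ (by positivity)
      intro ξ
      have key : Φ t s * (Φ s t₀ * P * Φ t₀ s) = (Φ t t₀ * P) * Φ t₀ s := by
        calc Φ t s * (Φ s t₀ * P * Φ t₀ s) = (Φ t s * Φ s t₀) * P * Φ t₀ s := by
              simp only [mul_assoc]
          _ = (Φ t t₀ * P) * Φ t₀ s := by rw [hcomp t htJ s hsJ t₀ ht₀]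
      calc ‖(Φ t s * (Φ s t₀ * P * Φ t₀ s)) ξ‖ = ‖(Φ t t₀ * P) ((Φ t₀ s) ξ)‖ := by
            rw [key, ContinuousLinearMap.mul_apply]
        _ ≤ K₁ * (h t / h s) ^ (-α) * ‖(Φ s t₀ * P) ((Φ t₀ s) ξ)‖ :=
            ha _ s hs t ht hst
        _ = K₁ * (h t / h s) ^ (-α) * ‖(Φ s t₀ * P * Φ t₀ s) ξ‖ := by
            simp only [ContinuousLinearMap.mul_apply]
        _ ≤ K₁ * (h t / h s) ^ (-α) * (M * ‖ξ‖) := by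
            apply mul_le_mul_of_nonneg_left _ (by positivity)
            exact le_trans (ContinuousLinearMap.le_opNorm _ _)
              (mul_le_mul_of_nonneg_right (hc s hs) (norm_nonneg _))
        _ ≤ K * (h t / h s) ^ (-α) * ‖ξ‖ := by
            have h0 : (0:ℝ) ≤ (h t / h s) ^ (-α) * ‖ξ‖ := by positivity
            calc K₁ * (h t / h s) ^ (-α) * (M * ‖ξ‖)
                = (K₁ * M) * ((h t / h s) ^ (-α) * ‖ξ‖) := by ring
              _ ≤ K * ((h t / h s) ^ (-α) * ‖ξ‖) :=
                  mul_le_mul_of_nonneg_right hKM1 h0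
              _ = K * (h t / h s) ^ (-α) * ‖ξ‖ := by ring
    · intro s hs t ht hts
      have hsJ : s ∈ J := hIJ hs
      have htJ : t ∈ J := hIJ ht
      have hfac : (0:ℝ) < (h s / h t) ^ (-α) :=
        Real.rpow_pos_of_pos (div_pos (hgr.pos s hsJ) (hgr.pos t htJ)) _
      apply ContinuousLinearMap.opNorm_le_bound _ (by positivity)
      intro ξ
      have key : Φ t s * (1 - Φ s t₀ * P * Φ t₀ s) = (Φ t t₀ * (1 - P)) * Φ t₀ s := by
        rw [mul_sub, mul_one, mul_sub, mul_one, sub_mul]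
        congr 1
        · rw [hcomp t htJ t₀ ht₀ s hsJ]
        · calc Φ t s * (Φ s t₀ * P * Φ t₀ s) = (Φ t s * Φ s t₀) * P * Φ t₀ s := by
                simp only [mul_assoc]
            _ = Φ t t₀ * P * Φ t₀ s := by rw [hcomp t htJ s hsJ t₀ ht₀]
      have key2 : (Φ s t₀ * (1 - P)) * Φ t₀ s = 1 - Φ s t₀ * P * Φ t₀ s := by
        rw [mul_sub, mul_one, sub_mul]
        congr 1
        rw [hcomp s hsJ t₀ ht₀ s hsJ, hid s hsJ]
      have hnorm2 : ∀ η : E, ‖(1 - Φ s t₀ * P * Φ t₀ s) η‖ ≤ (1 + M) * ‖η‖ := by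
        intro η
        have : (1 - Φ s t₀ * P * Φ t₀ s) η = η - (Φ s t₀ * P * Φ t₀ s) η := by
          simp
        rw [this]
        calc ‖η - (Φ s t₀ * P * Φ t₀ s) η‖ ≤ ‖η‖ + ‖(Φ s t₀ * P * Φ t₀ s) η‖ :=
              norm_sub_le _ _
          _ ≤ ‖η‖ + M * ‖η‖ := by
              gcongr
              exact le_trans (ContinuousLinearMap.le_opNorm _ _)
                (mul_le_mul_of_nonneg_right (hc s hs) (norm_nonneg _))
          _ = (1 + M) * ‖η‖ := by ring
      calc ‖(Φ t s * (1 - Φ s t₀ * P * Φ t₀ s)) ξ‖ = ‖(Φ t t₀ * (1 - P)) ((Φ t₀ s) ξ)‖ := by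
            rw [key, ContinuousLinearMap.mul_apply]
        _ ≤ K₂ * (h s / h t) ^ (-α) * ‖(Φ s t₀ * (1 - P)) ((Φ t₀ s) ξ)‖ :=
            hb _ s hs t ht hts
        _ = K₂ * (h s / h t) ^ (-α) * ‖(1 - Φ s t₀ * P * Φ t₀ s) ξ‖ := by
            rw [← ContinuousLinearMap.mul_apply, key2]
        _ ≤ K₂ * (h s / h t) ^ (-α) * ((1 + M) * ‖ξ‖) := by
            apply mul_le_mul_of_nonneg_left (hnorm2 ξ) (by positivity)
        _ ≤ K * (h s / h t) ^ (-α) * ‖ξ‖ := by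
            have h0 : (0:ℝ) ≤ (h s / h t) ^ (-α) * ‖ξ‖ := by positivity
            calc K₂ * (h s / h t) ^ (-α) * ((1 + M) * ‖ξ‖)
                = (K₂ * (1 + M)) * ((h s / h t) ^ (-α) * ‖ξ‖) := by ring
              _ ≤ K * ((h s / h t) ^ (-α) * ‖ξ‖) :=
                  mul_le_mul_of_nonneg_right hKM2 h0
              _ = K * (h s / h t) ^ (-α) * ‖ξ‖ := by ring
end
end

section
/- Let I ⊆ J be an interval unbounded above, fix t₀ ∈ J, and suppose the evolution family Φ has uniform bounded h-growth on I. If there exist an n×n real matrix P with P² = P, P ≠ 0 and P ≠ I, and constants K₁, K₂ > 0, α > 0 such that for every ξ ∈ ℝⁿ: |Φ(t,t₀)Pξ| ≤ K₁·(h(t)/h(s))^{-α}·|Φ(s,t₀)Pξ| for all t ≥ s with t, s ∈ I, and |Φ(t,t₀)(I − P)ξ| ≤ K₂·(h(s)/h(t))^{-α}·|Φ(s,t₀)(I − P)ξ| for all t ≤ s with t, s ∈ I, then there exists M > 0 such that ‖Φ(t,t₀)·P·Φ(t₀,t)‖ ≤ M for all t ∈ I. -/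
open Set

noncomputable section

variable {E : Type*} [NormedAddCommGroup E] [NormedSpace ℝ E]

set_option maxHeartbeats 1000000 in
/-- if `Φ` has uniform bounded `h`-growth on `I` (unbounded above) and
there is a nontrivial projection `P` (`P ≠ 0`, `P ≠ I`) with constants `K₁, K₂, α > 0`
satisfying (a) and (b), then the projections `Φ(t,t₀) P Φ(t₀,t)` are uniformly bounded on `I`. -/
theorem statement8 {J I : Set ℝ} {h hinv : ℝ → ℝ} (hgr : GrowthRate J h hinv)
    (hIJ : I ⊆ J) (hIc : I.OrdConnected) (hIunb : ∀ b : ℝ, ∃ t ∈ I, b < t)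
    {E : Type*} [NormedAddCommGroup E] [NormedSpace ℝ E] [FiniteDimensional ℝ E]
    (Φ : ℝ → ℝ → (E →L[ℝ] E)) (hΦ : IsEvolutionFamily J Φ)
    (t₀ : ℝ) (ht₀ : t₀ ∈ J)
    (hbg : UnifBoundedHGrowth J I h hinv Φ)
    (P : E →L[ℝ] E) (hP : P * P = P) (hP0 : P ≠ 0) (hPI : P ≠ 1)
    (K₁ K₂ α : ℝ) (hK₁ : 0 < K₁) (hK₂ : 0 < K₂) (hα : 0 < α)
    (ha : ∀ ξ : E, ∀ s ∈ I, ∀ t ∈ I, s ≤ t →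
      ‖(Φ t t₀ * P) ξ‖ ≤ K₁ * (h t / h s) ^ (-α) * ‖(Φ s t₀ * P) ξ‖)
    (hb : ∀ ξ : E, ∀ s ∈ I, ∀ t ∈ I, t ≤ s →
      ‖(Φ t t₀ * (1 - P)) ξ‖ ≤ K₂ * (h s / h t) ^ (-α) * ‖(Φ s t₀ * (1 - P)) ξ‖) :
    ∃ M > (0:ℝ), ∀ t ∈ I, ‖Φ t t₀ * P * Φ t₀ t‖ ≤ M := by
  obtain ⟨T, hT, C, hC, hgrow⟩ := hbg
  have hC0 : (0:ℝ) < C := lt_of_lt_of_le one_pos hC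
  -- J is upward closed
  have hJup : ∀ x ∈ J, ∀ y : ℝ, x ≤ y → y ∈ J := by
    rcases hgr.J_eq with ⟨a₀, rfl⟩ | rfl
    · intro x hx y hxy; exact lt_of_lt_of_le hx hxy
    · intro _ _ y _; trivial
  -- I is upward closed
  have hIup : ∀ x ∈ I, ∀ y : ℝ, x ≤ y → y ∈ I := by
    intro x hx y hxy
    obtain ⟨t', ht'I, ht'⟩ := hIunb y
    exact hIc.out hx ht'I ⟨hxy, le_of_lt ht'⟩
  have he : estar hinv ∈ J := hgr.inv_mem 1 (by norm_num)
  have hTJ : T ∈ J := hJup _ he T hT.le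
  have hT1 : 1 < h T := by
    have h0 := hgr.mono he hTJ hT
    unfold estar at h0
    rwa [hgr.inv_right 1 (by norm_num)] at h0
  have hT0 : (0:ℝ) < h T := lt_trans one_pos hT1
  -- comparison lemma via h
  have hle : ∀ {a b : ℝ}, a ∈ J → b ∈ J → h a ≤ h b → a ≤ b := by
    intro a b haJ hbJ hab
    by_contra hc
    push_neg at hc
    exact absurd (hgr.mono hbJ haJ hc) (not_lt.2 hab)
  -- choose N
  obtain ⟨N, hN⟩ := pow_unbounded_of_one_lt ((2*K₁*K₂) ^ (2*α)⁻¹) hT1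
  set ρ := (h T)^N with hρdef
  have hρ1 : (1:ℝ) ≤ ρ := one_le_pow₀ hT1.le
  have hρ0 : (0:ℝ) < ρ := lt_of_lt_of_le one_pos hρ1
  set δ := ρ ^ (-α) with hδdef
  have hδ0 : (0:ℝ) < δ := Real.rpow_pos_of_pos hρ0 _
  have hδ1 : δ ≤ 1 := Real.rpow_le_one_of_one_le_of_nonpos hρ1 (by linarith)
  have h2K : (0:ℝ) < 2*K₁*K₂ := by positivity
  have hKδ : K₁ * K₂ * (δ * δ) ≤ 1/2 := by
    have hρge : (2*K₁*K₂) ≤ ρ ^ (2*α) := by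
      have h1 : (2*K₁*K₂) ^ (2*α)⁻¹ ≤ ρ := hN.le
      have h2 := Real.rpow_le_rpow (Real.rpow_nonneg h2K.le _) h1
        (by positivity : (0:ℝ) ≤ 2*α)
      rwa [Real.rpow_inv_rpow h2K.le (by positivity)] at h2
    have hδδ : δ * δ = (ρ ^ (2*α))⁻¹ := by
      rw [hδdef, ← Real.rpow_add hρ0,
        show -α + -α = -(2*α) by ring, Real.rpow_neg hρ0.le]
    have hpos : (0:ℝ) < ρ ^ (2*α) := Real.rpow_pos_of_pos hρ0 _
    rw [hδδ]
    have hinvle : (ρ ^ (2*α))⁻¹ ≤ (2*K₁*K₂)⁻¹ := by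
      exact inv_anti₀ h2K hρge
    calc K₁ * K₂ * (ρ ^ (2*α))⁻¹ ≤ K₁ * K₂ * (2*K₁*K₂)⁻¹ := by
          gcongr
      _ = 1/2 := by field_simp
  -- the bound
  have hCN : (1:ℝ) ≤ C^N := one_le_pow₀ hC
  refine ⟨2*(1 + K₂*C^N), by nlinarith, ?_⟩
  intro t ht
  have htJ : t ∈ J := hIJ ht
  have hht : (0:ℝ) < h t := hgr.pos t htJ
  apply ContinuousLinearMap.opNorm_le_bound _ (by nlinarith)
  intro ξ
  rw [ContinuousLinearMap.mul_apply]
  set η := Φ t₀ t ξ with hηdef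
  -- the points g k
  set g : ℕ → ℝ := fun k => hinv ((h T)^k * h t) with hgdef
  have hgpos : ∀ k, (0:ℝ) < (h T)^k * h t := fun k => mul_pos (pow_pos hT0 k) hht
  have hgJ : ∀ k, g k ∈ J := fun k => hgr.inv_mem _ (hgpos k)
  have hgh : ∀ k, h (g k) = (h T)^k * h t := fun k => hgr.inv_right _ (hgpos k)
  have hg0 : g 0 = t := by
    simp only [hgdef, pow_zero, one_mul]
    exact hgr.inv_left t htJ
  have hgt : ∀ k, t ≤ g k := by
    intro k
    apply hle htJ (hgJ k)
    rw [hgh k]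
    nlinarith [one_le_pow₀ hT1.le (n := k), hht.le]
  have hgI : ∀ k, g k ∈ I := fun k => hIup t ht (g k) (hgt k)
  -- growth induction
  have key : ∀ k, ‖(Φ (g k) t₀) η‖ ≤ C^k * ‖(Φ t t₀) η‖ := by
    intro k
    induction k with
    | zero => simp [hg0]
    | succ k ih =>
      have hmono : g k ≤ g (k+1) := by
        apply hle (hgJ k) (hgJ (k+1))
        rw [hgh k, hgh (k+1), pow_succ]
        have h9 : 0 ≤ (h T)^k * h t * (h T - 1) :=
          mul_nonneg (mul_pos (pow_pos hT0 k) hht).le (by linarith)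
        nlinarith [h9]
      have hstar : _root_.star h hinv (g k) T = g (k+1) := by
        rw [show _root_.star h hinv (g k) T = hinv (h (g k) * h T) from rfl, hgh k]
        show hinv ((h T)^k * h t * h T) = hinv ((h T)^(k+1) * h t)
        congr 1
        ring
      have step : ‖(Φ (g (k+1)) t₀) η‖ ≤ C * ‖(Φ (g k) t₀) η‖ := by
        apply hgrow t₀ ht₀ η (g k) (hgI k) (g (k+1)) (hgI (k+1)) hmono
        rw [hstar]
      calc ‖(Φ (g (k+1)) t₀) η‖ ≤ C * (C^k * ‖(Φ t t₀) η‖) :=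
            le_trans step (by gcongr)
        _ = C^(k+1) * ‖(Φ t t₀) η‖ := by ring
  -- the point s
  set s := g N with hsdef
  have hsI : s ∈ I := hgI N
  have hts : t ≤ s := hgt N
  have hsh : h s / h t = ρ := by
    rw [hsdef, hgh N]; field_simp; exact hρdef.symm
  -- Φ t t₀ η = ξ
  have hξ : (Φ t t₀) η = ξ := by
    rw [hηdef, ← ContinuousLinearMap.mul_apply, hΦ.2 t htJ t₀ ht₀ t htJ,
      hΦ.1 t htJ, ContinuousLinearMap.one_apply]
  -- abbreviations
  set a := ‖(Φ t t₀ * P) η‖ with hadef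
  set b := ‖(Φ t t₀ * (1-P)) η‖ with hbdef
  set A := ‖(Φ s t₀ * P) η‖ with hAdef
  set B := ‖(Φ s t₀ * (1-P)) η‖ with hBdef
  have ha0 : 0 ≤ a := norm_nonneg _
  have hξ0 : 0 ≤ ‖ξ‖ := norm_nonneg _
  -- estimate (a)
  have hA' : A ≤ K₁ * δ * a := by
    have := ha η t ht s hsI hts
    rwa [hsh, ← hδdef] at this
  -- estimate (b)
  have hb' : b ≤ K₂ * δ * B := by
    have := hb η s hsI t ht hts
    rwa [hsh, ← hδdef] at this
  -- decompositions
  have hsum_s : (Φ s t₀ * P) η + (Φ s t₀ * (1 - P)) η = (Φ s t₀) η := by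
    rw [ContinuousLinearMap.mul_apply, ContinuousLinearMap.mul_apply, ← map_add]
    congr 1
    simp
  have hsum_t : (Φ t t₀ * P) η + (Φ t t₀ * (1 - P)) η = (Φ t t₀) η := by
    rw [ContinuousLinearMap.mul_apply, ContinuousLinearMap.mul_apply, ← map_add]
    congr 1
    simp
  have hB' : B ≤ ‖(Φ s t₀) η‖ + A := by
    have : (Φ s t₀ * (1 - P)) η = (Φ s t₀) η - (Φ s t₀ * P) η := by
      rw [← hsum_s]; abel
    rw [hBdef, this]
    exact le_trans (norm_sub_le _ _) (by rw [hAdef])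
  have ha' : a ≤ ‖ξ‖ + b := by
    have : (Φ t t₀ * P) η = (Φ t t₀) η - (Φ t t₀ * (1 - P)) η := by
      rw [← hsum_t]; abel
    rw [hadef, this, hξ]
    exact le_trans (norm_sub_le _ _) (by rw [hbdef])
  have hfull : ‖(Φ s t₀) η‖ ≤ C^N * ‖ξ‖ := by
    have := key N
    rwa [hξ, ← hsdef] at this
  -- final arithmetic
  clear_value g η a b A B
  have e1 : b ≤ K₂ * δ * (C^N * ‖ξ‖ + K₁ * δ * a) := by
    calc b ≤ K₂ * δ * B := hb'
      _ ≤ K₂ * δ * (C^N * ‖ξ‖ + K₁ * δ * a) := by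
          have hBB : B ≤ C^N * ‖ξ‖ + K₁ * δ * a :=
            le_trans hB' (add_le_add hfull hA')
          have hKd : (0:ℝ) ≤ K₂ * δ := by positivity
          exact mul_le_mul_of_nonneg_left hBB hKd
  have e2 : K₂ * δ * (C^N * ‖ξ‖) ≤ K₂ * C^N * ‖ξ‖ := by
    have h9 : K₂ * δ * (C^N * ‖ξ‖) = (K₂ * C^N * ‖ξ‖) * δ := by ring
    have h10 : (K₂ * C^N * ‖ξ‖) * δ ≤ (K₂ * C^N * ‖ξ‖) * 1 :=
      mul_le_mul_of_nonneg_left hδ1 (by positivity)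
    rw [h9]
    linarith
  have e3 : K₂ * δ * (K₁ * δ * a) ≤ (1/2) * a := by
    have : K₂ * δ * (K₁ * δ * a) = (K₁ * K₂ * (δ * δ)) * a := by ring
    rw [this]
    exact mul_le_mul_of_nonneg_right hKδ ha0
  linarith [e1, e2, e3, ha']
end
end

section
/- If the evolution family Φ has a uniform h-dichotomy on [e∗, +∞), then Φ is uniformly h-noncritical on [e∗, +∞): there exist T > e∗ and θ ∈ (0,1) such that every solution satisfies |x(t)| ≤ θ·sup{|x(u)| : u ∈ J, |u∗t^{∗-1}|∗ ≤ T} for all t ≥ T. -/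
open Set

noncomputable section

variable {E : Type*} [NormedAddCommGroup E] [NormedSpace ℝ E]

set_option maxHeartbeats 1000000

/-- a uniform `h`-dichotomy on `[e∗,∞)` implies uniform `h`-noncriticality
on `[e∗,∞)`. -/
theorem statement10 {J : Set ℝ} {h hinv : ℝ → ℝ} (hgr : GrowthRate J h hinv)
    {E : Type*} [NormedAddCommGroup E] [NormedSpace ℝ E] [FiniteDimensional ℝ E]
    (Φ : ℝ → ℝ → (E →L[ℝ] E)) (hΦ : IsEvolutionFamily J Φ)
    (hUHD : HasUHD (Set.Ici (estar hinv)) h Φ) :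
    UnifHNoncritical J h hinv Φ := by
  classical
  obtain ⟨K, hK, α, hα, P, hproj, hcomm, hst, hus⟩ := hUHD
  obtain ⟨hΦid, hΦmul⟩ := hΦ
  have inv_mem' : ∀ y : ℝ, 0 < y → hinv y ∈ J := fun y hy => hgr.inv_mem y (Set.mem_Ioi.mpr hy)
  have inv_right' : ∀ y : ℝ, 0 < y → h (hinv y) = y := fun y hy => hgr.inv_right y (Set.mem_Ioi.mpr hy)
  have heJ : estar hinv ∈ J := inv_mem' 1 one_pos
  have hJup : ∀ {u v : ℝ}, u ∈ J → u ≤ v → v ∈ J := by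
    intro u v hu huv
    rcases hgr.J_eq with ⟨a₀, hJ⟩ | hJ
    · rw [hJ] at hu ⊢; exact lt_of_lt_of_le hu huv
    · rw [hJ]; trivial
  have hle_iff : ∀ {u v : ℝ}, u ∈ J → v ∈ J → (h u ≤ h v ↔ u ≤ v) := by
    intro u v hu hv; exact hgr.mono.le_iff_le hu hv
  have hinv_le : ∀ {y z : ℝ}, 0 < y → 0 < z → (hinv y ≤ hinv z ↔ y ≤ z) := by
    intro y z hy hz
    have := hle_iff (inv_mem' y hy) (inv_mem' z hz)
    rw [inv_right' y hy, inv_right' z hz] at this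
    exact this.symm
  -- choose Y and T
  set Y : ℝ := (4 * K) ^ (α⁻¹) with hYdef
  have h4K : (1:ℝ) < 4 * K := by nlinarith
  have hY1 : 1 < Y := (Real.one_lt_rpow_iff_of_pos (by linarith)).mpr
    (Or.inl ⟨h4K, by positivity⟩)
  have hY0 : 0 < Y := lt_trans one_pos hY1
  set T : ℝ := hinv Y with hTdef
  have hTJ : T ∈ J := inv_mem' Y hY0
  have hhT : h T = Y := inv_right' Y hY0
  have hhe : h (estar hinv) = 1 := inv_right' 1 one_pos
  have heT : estar hinv < T := by
    have hle : estar hinv ≤ T := by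
      have := (hinv_le one_pos hY0).mpr (le_of_lt hY1)
      simpa [estar, hTdef] using this
    rcases lt_or_eq_of_le hle with h' | h'
    · exact h'
    · exfalso
      have hht : h (estar hinv) = h T := by rw [h']
      rw [hhT, hhe] at hht
      linarith
  have heT' : estar hinv ≤ T := le_of_lt heT
  have hTI : T ∈ Set.Ici (estar hinv) := heT'
  refine ⟨T, heT, 1/2, by norm_num, by norm_num, ?_⟩
  intro s₀ hs₀ ξ t hTt
  have htJ : t ∈ J := hJup hTJ hTt
  have htI : t ∈ Set.Ici (estar hinv) := le_trans heT' hTt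
  have hht : Y ≤ h t := by rw [← hhT]; exact (hle_iff hTJ htJ).mpr hTt
  have hht0 : 0 < h t := hgr.pos t htJ
  -- a and b
  set a : ℝ := hinv (h t / Y) with hadef
  set b : ℝ := hinv (h t * Y) with hbdef
  have hq0 : 0 < h t / Y := by positivity
  have hq0' : 0 < h t * Y := by positivity
  have haJ : a ∈ J := inv_mem' _ hq0
  have hbJ : b ∈ J := inv_mem' _ hq0'
  have hha : h a = h t / Y := inv_right' _ hq0
  have hhb : h b = h t * Y := inv_right' _ hq0'
  have hha1 : 1 ≤ h a := by rw [hha]; rw [le_div_iff₀ hY0]; linarith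
  have haI : a ∈ Set.Ici (estar hinv) := by
    have := (hle_iff heJ haJ).mp (by rw [hhe]; exact hha1)
    exact this
  have hbI : b ∈ Set.Ici (estar hinv) := by
    have h1b : 1 ≤ h b := by rw [hhb]; nlinarith
    exact (hle_iff heJ hbJ).mp (by rw [hhe]; exact h1b)
  have hat : a ≤ t := by
    refine (hle_iff haJ htJ).mp ?_
    rw [hha]
    exact div_le_self (le_of_lt hht0) (le_of_lt hY1)
  have htb : t ≤ b := by
    refine (hle_iff htJ hbJ).mp ?_
    rw [hhb]
    nlinarith
  -- decomposition lemma
  have decomp : ∀ u, u ∈ Set.Ici (estar hinv) → u ∈ J →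
      (Φ u a * P a) * Φ a s₀ + (Φ u b * (1 - P b)) * Φ b s₀ = Φ u s₀ := by
    intro u huI huJ
    have h1 : Φ a u * Φ u s₀ = Φ a s₀ := hΦmul a haJ u huJ s₀ hs₀
    have h2 : Φ b u * Φ u s₀ = Φ b s₀ := hΦmul b hbJ u huJ s₀ hs₀
    have h3 : P a * Φ a u = Φ a u * P u := hcomm a haI u huI
    have h4 : P b * Φ b u = Φ b u * P u := hcomm b hbI u huI
    have h5 : Φ u a * Φ a u = 1 := by
      rw [hΦmul u huJ a haJ u huJ]; exact hΦid u huJ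
    have h6 : Φ u b * Φ b u = 1 := by
      rw [hΦmul u huJ b hbJ u huJ]; exact hΦid u huJ
    have e1 : (Φ u a * P a) * Φ a s₀ = P u * Φ u s₀ := by
      rw [← h1, ← mul_assoc, mul_assoc (Φ u a), h3, ← mul_assoc, h5, one_mul]
    have e2 : (Φ u b * (1 - P b)) * Φ b s₀ = (1 - P u) * Φ u s₀ := by
      have h4' : (1 - P b) * Φ b u = Φ b u * (1 - P u) := by
        rw [sub_mul, mul_sub, one_mul, mul_one, h4]
      rw [← h2, ← mul_assoc, mul_assoc (Φ u b), h4', ← mul_assoc, h6, one_mul]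
    rw [e1, e2, ← add_mul]
    rw [add_sub_cancel, one_mul]
  have hnorm : ∀ u, u ∈ Set.Ici (estar hinv) → u ∈ J →
      ‖(Φ u s₀) ξ‖ ≤ ‖Φ u a * P a‖ * ‖(Φ a s₀) ξ‖ + ‖Φ u b * (1 - P b)‖ * ‖(Φ b s₀) ξ‖ := by
    intro u huI huJ
    have := decomp u huI huJ
    have happ : (Φ u s₀) ξ = (Φ u a * P a) ((Φ a s₀) ξ) + (Φ u b * (1 - P b)) ((Φ b s₀) ξ) := by
      conv_lhs => rw [← this]
      simp [ContinuousLinearMap.add_apply, ContinuousLinearMap.mul_apply]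
    rw [happ]
    refine le_trans (norm_add_le _ _) (add_le_add ?_ ?_) <;>
      exact ContinuousLinearMap.le_opNorm _ _
  -- characterization of the set
  have hstar_eq : ∀ u ∈ J, star h hinv u (sinv h hinv t) = hinv (h u / h t) := by
    intro u huJ
    show hinv (h u * h (hinv (1 / h t))) = hinv (h u / h t)
    rw [inv_right' _ (by positivity : (0:ℝ) < 1 / h t)]
    rw [mul_one_div]
  have hmemiff : ∀ u ∈ J,
      (absStar h hinv (star h hinv u (sinv h hinv t)) ≤ T ↔
        h t / Y ≤ h u ∧ h u ≤ h t * Y) := by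
    intro u huJ
    have hu0 : 0 < h u := hgr.pos u huJ
    have hq : 0 < h u / h t := by positivity
    rw [hstar_eq u huJ]
    unfold absStar
    by_cases hcase : estar hinv ≤ hinv (h u / h t)
    · rw [if_pos hcase]
      have h1q : 1 ≤ h u / h t := by
        have := (hinv_le one_pos hq)
        unfold estar at hcase
        exact this.mp hcase
      constructor
      · intro hle
        constructor
        · have : h t ≤ h u := by
            rw [le_div_iff₀ hht0] at h1q; linarith
          calc h t / Y ≤ h t := div_le_self (le_of_lt hht0) (le_of_lt hY1)
            _ ≤ h u := this
        · have hq' : h u / h t ≤ Y := (hinv_le hq hY0).mp hle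
          rw [div_le_iff₀ hht0] at hq'
          nlinarith
      · rintro ⟨-, h2⟩
        refine (hinv_le hq hY0).mpr ?_
        rw [div_le_iff₀ hht0]
        nlinarith
    · rw [if_neg hcase]
      push_neg at hcase
      have hq1 : h u / h t < 1 := by
        by_contra hcon
        push_neg at hcon
        exact absurd ((hinv_le one_pos hq).mpr hcon) (not_le.mpr hcase)
      unfold sinv
      rw [inv_right' _ hq]
      have hq2 : 0 < 1 / (h u / h t) := by positivity
      have hsimp : 1 / (h u / h t) = h t / h u := by
        field_simp
      constructor
      · intro hle
        have := (hinv_le hq2 hY0).mp hle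
        rw [hsimp] at this
        rw [div_le_iff₀ hu0] at this
        constructor
        · rw [div_le_iff₀ hY0, mul_comm]; exact this
        · rw [div_lt_iff₀ hht0, one_mul] at hq1
          calc h u ≤ h t := le_of_lt hq1
            _ ≤ h t * Y := le_mul_of_one_le_right (le_of_lt hht0) (le_of_lt hY1)
      · rintro ⟨h1, -⟩
        refine (hinv_le hq2 hY0).mpr ?_
        rw [hsimp, div_le_iff₀ hu0]
        rw [div_le_iff₀ hY0] at h1
        nlinarith
  -- the set and its sup
  set Sset := ((fun u => ‖(Φ u s₀) ξ‖) ''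
      {u | u ∈ J ∧ absStar h hinv (star h hinv u (sinv h hinv t)) ≤ T}) with hSdef
  have haMem : a ∈ {u | u ∈ J ∧ absStar h hinv (star h hinv u (sinv h hinv t)) ≤ T} := by
    refine ⟨haJ, (hmemiff a haJ).mpr ⟨by rw [hha], ?_⟩⟩
    rw [hha]
    calc h t / Y ≤ h t := div_le_self (le_of_lt hht0) (le_of_lt hY1)
      _ ≤ h t * Y := by nlinarith
  have hbMem : b ∈ {u | u ∈ J ∧ absStar h hinv (star h hinv u (sinv h hinv t)) ≤ T} := by
    refine ⟨hbJ, (hmemiff b hbJ).mpr ⟨?_, by rw [hhb]⟩⟩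
    rw [hhb]
    calc h t / Y ≤ h t := div_le_self (le_of_lt hht0) (le_of_lt hY1)
      _ ≤ h t * Y := by nlinarith
  have hKY0 : (0:ℝ) ≤ K * Y ^ (-α) := by positivity
  have hbdd : BddAbove Sset := by
    refine ⟨K * ‖(Φ a s₀) ξ‖ + K * ‖(Φ b s₀) ξ‖, ?_⟩
    rintro x ⟨u, ⟨huJ, huT⟩, rfl⟩
    obtain ⟨hlo, hhi⟩ := (hmemiff u huJ).mp huT
    have huI : u ∈ Set.Ici (estar hinv) := by
      refine (hle_iff heJ huJ).mp ?_
      rw [hhe]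
      calc (1:ℝ) ≤ h a := hha1
        _ ≤ h u := by rw [hha]; exact hlo
    have hau : a ≤ u := (hle_iff haJ huJ).mp (by rw [hha]; exact hlo)
    have hub : u ≤ b := (hle_iff huJ hbJ).mp (by rw [hhb]; exact hhi)
    have hA : ‖Φ u a * P a‖ ≤ K := by
      refine le_trans (hst a haI u huI hau) ?_
      have h1 : 1 ≤ h u / h a := by
        rw [le_div_iff₀ (by positivity : 0 < h a)]
        rw [one_mul]
        exact (hle_iff haJ huJ).mpr hau
      have := Real.rpow_le_one_of_one_le_of_nonpos h1 (by linarith : -α ≤ 0)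
      nlinarith
    have hB : ‖Φ u b * (1 - P b)‖ ≤ K := by
      refine le_trans (hus b hbI u huI hub) ?_
      have h1 : 1 ≤ h b / h u := by
        rw [le_div_iff₀ (hgr.pos u huJ)]
        rw [one_mul]
        exact (hle_iff huJ hbJ).mpr hub
      have := Real.rpow_le_one_of_one_le_of_nonpos h1 (by linarith : -α ≤ 0)
      nlinarith
    have := hnorm u huI huJ
    have ha0 : (0:ℝ) ≤ ‖(Φ a s₀) ξ‖ := norm_nonneg _
    have hb0 : (0:ℝ) ≤ ‖(Φ b s₀) ξ‖ := norm_nonneg _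
    nlinarith [norm_nonneg (Φ u a * P a), norm_nonneg (Φ u b * (1 - P b))]
  have hSa : ‖(Φ a s₀) ξ‖ ≤ sSup Sset := le_csSup hbdd ⟨a, haMem, rfl⟩
  have hSb : ‖(Φ b s₀) ξ‖ ≤ sSup Sset := le_csSup hbdd ⟨b, hbMem, rfl⟩
  have hS0 : 0 ≤ sSup Sset := le_trans (norm_nonneg _) hSa
  -- norm bounds at t
  have hA : ‖Φ t a * P a‖ ≤ K * Y ^ (-α) := by
    have := hst a haI t htI hat
    have heq : h t / h a = Y := by
      rw [hha]; field_simp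
    rwa [heq] at this
  have hB : ‖Φ t b * (1 - P b)‖ ≤ K * Y ^ (-α) := by
    have := hus b hbI t htI htb
    have heq : h b / h t = Y := by
      rw [hhb]; field_simp
    rwa [heq] at this
  have hmain := hnorm t htI htJ
  have hfinal : ‖(Φ t s₀) ξ‖ ≤ (K * Y ^ (-α)) * (2 * sSup Sset) := by
    have ha0 : (0:ℝ) ≤ ‖(Φ a s₀) ξ‖ := norm_nonneg _
    have hb0 : (0:ℝ) ≤ ‖(Φ b s₀) ξ‖ := norm_nonneg _
    nlinarith [norm_nonneg (Φ t a * P a), norm_nonneg (Φ t b * (1 - P b))]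
  have hval : K * Y ^ (-α) * 2 = 1 / 2 := by
    have : Y ^ (-α) = (4 * K)⁻¹ := by
      rw [hYdef, ← Real.rpow_mul (by linarith : (0:ℝ) ≤ 4 * K)]
      rw [show (α⁻¹ * -α) = -1 by field_simp]
      rw [Real.rpow_neg_one]
    rw [this]
    field_simp
    ring
  calc ‖(Φ t s₀) ξ‖ ≤ (K * Y ^ (-α)) * (2 * sSup Sset) := hfinal
    _ = (K * Y ^ (-α) * 2) * sSup Sset := by ring
    _ = 1 / 2 * sSup Sset := by rw [hval]
end
end

section
/- Suppose there exist constants T > e∗, C_T > 1 and θ ∈ (0,1) such that every solution t ↦ x(t) of the evolution family Φ satisfies: (a) |x(t)| ≤ C_T·|x(s)| whenever e∗ ≤ s ≤ t ≤ s∗T, and (b) |x(t)| ≤ θ·sup{|x(u)| : u ∈ J, |u∗t^{∗-1}|∗ ≤ T} for all t ≥ T. Then, with K = θ⁻¹·C_T and α = −ln(θ)/ln(h(T)) (so K ≥ 1 and α > 0), every solution t ↦ x(t) that is bounded on [e∗, +∞) satisfies |x(t)| ≤ K·(h(t)/h(s))^{-α}·|x(s)| for all t ≥ s ≥ e∗.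 -/
open Set

noncomputable section

variable {E : Type*} [NormedAddCommGroup E] [NormedSpace ℝ E]

/-- under hypotheses (a) and (b) (as in Statement 11), with
`K = θ⁻¹ C_T` and `α = -ln θ / ln (h T)`, every solution bounded on `[e∗,∞)`
satisfies `|x t| ≤ K (h t / h s)^{-α} |x s|` for all `t ≥ s ≥ e∗`. -/
theorem statement12 {J : Set ℝ} {h hinv : ℝ → ℝ} (hgr : GrowthRate J h hinv)
    {E : Type*} [NormedAddCommGroup E] [NormedSpace ℝ E] [FiniteDimensional ℝ E]
    (Φ : ℝ → ℝ → (E →L[ℝ] E)) (hΦ : IsEvolutionFamily J Φ)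
    (T C θ : ℝ) (hT : estar hinv < T) (hC : 1 < C) (hθ0 : 0 < θ) (hθ1 : θ < 1)
    (ha : ∀ s₀ ∈ J, ∀ ξ : E, ∀ s t : ℝ, estar hinv ≤ s → s ≤ t → t ≤ star h hinv s T →
      ‖(Φ t s₀) ξ‖ ≤ C * ‖(Φ s s₀) ξ‖)
    (hb : ∀ s₀ ∈ J, ∀ ξ : E, ∀ t : ℝ, T ≤ t →
      ‖(Φ t s₀) ξ‖ ≤ θ * sSup ((fun u => ‖(Φ u s₀) ξ‖) ''
        {u | u ∈ J ∧ absStar h hinv (star h hinv u (sinv h hinv t)) ≤ T}))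
    (K α : ℝ) (hKdef : K = θ⁻¹ * C) (hαdef : α = -Real.log θ / Real.log (h T)) :
    ∀ s₀ ∈ J, ∀ ξ : E,
      (∃ B : ℝ, ∀ t ∈ Set.Ici (estar hinv), ‖(Φ t s₀) ξ‖ ≤ B) →
      ∀ s t : ℝ, estar hinv ≤ s → s ≤ t →
        ‖(Φ t s₀) ξ‖ ≤ K * (h t / h s) ^ (-α) * ‖(Φ s s₀) ξ‖ := by
  intro s₀ hs₀ ξ hbdd s t hes hst
  obtain ⟨B, hB⟩ := hbdd
  have heJ : estar hinv ∈ J := hgr.inv_mem 1 (Set.mem_Ioi.mpr one_pos)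
  have hhe : h (estar hinv) = 1 := hgr.inv_right 1 (Set.mem_Ioi.mpr one_pos)
  have hIci : ∀ {a : ℝ}, a ∈ J → Set.Ici a ⊆ J := by
    intro a haJ
    rcases hgr.J_eq with ⟨a₀, rfl⟩ | rfl
    · exact fun u hu => Set.mem_Ioi.mpr (lt_of_lt_of_le (Set.mem_Ioi.mp haJ) (Set.mem_Ici.mp hu))
    · exact fun u _ => trivial
  have hTJ : T ∈ J := hIci heJ hT.le
  have hhT : 1 < h T := by rw [← hhe]; exact hgr.mono heJ hTJ hT
  have hT0 : 0 < h T := lt_trans one_pos hhT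
  have hle_iff : ∀ {u v : ℝ}, u ∈ J → v ∈ J → (h u ≤ h v ↔ u ≤ v) :=
    fun hu hv => hgr.mono.le_iff_le hu hv
  -- the supremum function
  set M : ℝ → ℝ := fun a => sSup ((fun u => ‖(Φ u s₀) ξ‖) '' Set.Ici a) with hM
  have hbdd' : ∀ a, estar hinv ≤ a → BddAbove ((fun u => ‖(Φ u s₀) ξ‖) '' Set.Ici a) := by
    intro a hea
    refine ⟨B, ?_⟩
    rintro _ ⟨u, hu, rfl⟩
    exact hB u (le_trans hea hu)
  have hne : ∀ a : ℝ, ((fun u => ‖(Φ u s₀) ξ‖) '' Set.Ici a).Nonempty :=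
    fun a => ⟨_, Set.mem_image_of_mem _ (Set.self_mem_Ici)⟩
  have hxleM : ∀ a, estar hinv ≤ a → ‖(Φ a s₀) ξ‖ ≤ M a :=
    fun a hea => le_csSup (hbdd' a hea) (Set.mem_image_of_mem _ Set.self_mem_Ici)
  -- star facts
  have hstar : ∀ a, a ∈ J → h (star h hinv a T) = h a * h T := by
    intro a haJ
    exact hgr.inv_right _ (Set.mem_Ioi.mpr (mul_pos (hgr.pos a haJ) hT0))
  have hstarJ : ∀ a, a ∈ J → star h hinv a T ∈ J := by
    intro a haJ
    exact hgr.inv_mem _ (Set.mem_Ioi.mpr (mul_pos (hgr.pos a haJ) hT0))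
  have hone_le : ∀ a, estar hinv ≤ a → 1 ≤ h a := by
    intro a hea
    have haJ : a ∈ J := hIci heJ hea
    have := (hle_iff heJ haJ).mpr hea
    rwa [hhe] at this
  have hestar : ∀ a, estar hinv ≤ a → estar hinv ≤ star h hinv a T := by
    intro a hea
    have haJ : a ∈ J := hIci heJ hea
    refine (hle_iff heJ (hstarJ a haJ)).mp ?_
    rw [hhe, hstar a haJ]
    nlinarith [hone_le a hea]
  -- key step : M (a ∗ T) ≤ θ * M a
  have step : ∀ a, estar hinv ≤ a → M (star h hinv a T) ≤ θ * M a := by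
    intro a hea
    have haJ : a ∈ J := hIci heJ hea
    refine csSup_le (hne _) ?_
    rintro _ ⟨σ, hσ, rfl⟩
    have hσJ : σ ∈ J := hIci (hstarJ a haJ) hσ
    have hσ0 : 0 < h σ := hgr.pos σ hσJ
    have hhσ : h a * h T ≤ h σ := by
      rw [← hstar a haJ]; exact ((hle_iff (hstarJ a haJ) hσJ).mpr hσ)
    have hTσ : T ≤ σ := by
      refine (hle_iff hTJ hσJ).mp ?_
      nlinarith [hone_le a hea]
    have hb' := hb s₀ hs₀ ξ σ hTσ
    -- the window set is contained in Ici a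
    have hsub : {u | u ∈ J ∧ absStar h hinv (star h hinv u (sinv h hinv σ)) ≤ T} ⊆ Set.Ici a := by
      rintro u ⟨huJ, habs⟩
      have hu0 : 0 < h u := hgr.pos u huJ
      have hsinvσ : h (sinv h hinv σ) = 1 / h σ := hgr.inv_right _ (Set.mem_Ioi.mpr (by positivity))
      have hw0 : 0 < h u * h (sinv h hinv σ) := by rw [hsinvσ]; positivity
      have hwJ : star h hinv u (sinv h hinv σ) ∈ J := hgr.inv_mem _ (Set.mem_Ioi.mpr hw0)
      have hw : h (star h hinv u (sinv h hinv σ)) = h u / h σ := by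
        rw [_root_.star, hgr.inv_right _ (Set.mem_Ioi.mpr hw0), hsinvσ]; ring
      have hkey : h σ / h T ≤ h u := by
        by_cases hcase : estar hinv ≤ star h hinv u (sinv h hinv σ)
        · have h1 : 1 ≤ h u / h σ := by
            rw [← hw, ← hhe]; exact (hle_iff heJ hwJ).mpr hcase
          have : h σ ≤ h u := by
            rw [le_div_iff₀ hσ0] at h1; linarith
          calc h σ / h T ≤ h σ := div_le_self hσ0.le hhT.le
            _ ≤ h u := this
        · have habs' : sinv h hinv (star h hinv u (sinv h hinv σ)) ≤ T := by
            rw [absStar, if_neg hcase] at habs; exact habs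
          have hw0' : (0:ℝ) < 1 / h (star h hinv u (sinv h hinv σ)) := by
            rw [hw]; positivity
          have hswJ : sinv h hinv (star h hinv u (sinv h hinv σ)) ∈ J := hgr.inv_mem _ (Set.mem_Ioi.mpr hw0')
          have h2 : h (sinv h hinv (star h hinv u (sinv h hinv σ))) ≤ h T :=
            (hle_iff hswJ hTJ).mpr habs'
          rw [_root_.sinv, hgr.inv_right _ (Set.mem_Ioi.mpr hw0'), hw] at h2
          rw [one_div_div] at h2
          rw [div_le_iff₀ hu0] at h2
          rw [div_le_iff₀ hT0, mul_comm]
          linarith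
      have : h a ≤ h u := by
        have : h a ≤ h σ / h T := by
          rw [le_div_iff₀ hT0]; linarith
        linarith
      exact (hle_iff haJ huJ).mp this
    have hmemS : σ ∈ {u | u ∈ J ∧ absStar h hinv (star h hinv u (sinv h hinv σ)) ≤ T} := by
      refine ⟨hσJ, ?_⟩
      have h1 : star h hinv σ (sinv h hinv σ) = estar hinv := by
        rw [_root_.star, sinv, hgr.inv_right _ (Set.mem_Ioi.mpr (by positivity : (0:ℝ) < 1 / h σ)),
          mul_one_div, div_self hσ0.ne', estar]
      rw [h1, absStar, if_pos le_rfl]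
      exact hT.le
    have hsuple : sSup ((fun u => ‖(Φ u s₀) ξ‖) ''
        {u | u ∈ J ∧ absStar h hinv (star h hinv u (sinv h hinv σ)) ≤ T}) ≤ M a :=
      csSup_le_csSup (hbdd' a hea) ⟨_, Set.mem_image_of_mem _ hmemS⟩ (Set.image_mono hsub)
    calc ‖(Φ σ s₀) ξ‖ ≤ θ * sSup ((fun u => ‖(Φ u s₀) ξ‖) ''
          {u | u ∈ J ∧ absStar h hinv (star h hinv u (sinv h hinv σ)) ≤ T}) := hb'
      _ ≤ θ * M a := mul_le_mul_of_nonneg_left hsuple hθ0.le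
  -- claim : M a ≤ C * ‖x a‖
  have claim2 : ∀ a, estar hinv ≤ a → M a ≤ C * ‖(Φ a s₀) ξ‖ := by
    intro a hea
    have haJ : a ∈ J := hIci heJ hea
    have hmax : M a ≤ max (C * ‖(Φ a s₀) ξ‖) (θ * M a) := by
      refine csSup_le (hne _) ?_
      rintro _ ⟨σ, hσ, rfl⟩
      by_cases hc : σ ≤ star h hinv a T
      · exact le_max_of_le_left (ha s₀ hs₀ ξ a σ hea hσ hc)
      · push_neg at hc
        refine le_max_of_le_right ?_
        refine le_trans ?_ (step a hea)
        exact le_csSup (hbdd' _ (hestar a hea)) (Set.mem_image_of_mem _ hc.le)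
    rcases le_max_iff.mp hmax with h1 | h2
    · exact h1
    · have hM0 : 0 ≤ M a := le_trans (norm_nonneg _) (hxleM a hea)
      have hMle : M a ≤ 0 := by nlinarith [h2, hM0, hθ1]
      have hCx : 0 ≤ C * ‖(Φ a s₀) ξ‖ := mul_nonneg (by linarith) (norm_nonneg _)
      linarith
  -- iteration along tₙ = s ∗ Tⁿ
  have hsJ : s ∈ J := hIci heJ hes
  have htJ : t ∈ J := hIci hsJ hst
  have hhs : 0 < h s := hgr.pos s hsJ
  have hhs1 : 1 ≤ h s := hone_le s hes
  have hhst : h s ≤ h t := (hle_iff hsJ htJ).mpr hst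
  have hht : 0 < h t := lt_of_lt_of_le hhs hhst
  set tn : ℕ → ℝ := fun n => hinv (h s * h T ^ n) with htn
  have hpos : ∀ n : ℕ, 0 < h s * h T ^ n := fun n => by positivity
  have htnJ : ∀ n, tn n ∈ J := fun n => hgr.inv_mem _ (Set.mem_Ioi.mpr (hpos n))
  have hhtn : ∀ n, h (tn n) = h s * h T ^ n := fun n => hgr.inv_right _ (Set.mem_Ioi.mpr (hpos n))
  have hetn : ∀ n, estar hinv ≤ tn n := by
    intro n
    refine (hle_iff heJ (htnJ n)).mp ?_
    rw [hhe, hhtn]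
    nlinarith [(one_le_pow₀ hhT.le : (1:ℝ) ≤ h T ^ n)]
  have htn0 : tn 0 = s := by
    have : h s * h T ^ 0 = h s := by ring
    rw [htn]; simp only [this]; exact hgr.inv_left s hsJ
  have hstep' : ∀ n, star h hinv (tn n) T = tn (n + 1) := by
    intro n
    rw [_root_.star, hhtn]
    congr 1
    ring
  have hMn : ∀ n, M (tn n) ≤ θ ^ n * M s := by
    intro n
    induction n with
    | zero => simp [htn0]
    | succ n ih =>
      calc M (tn (n + 1)) = M (star h hinv (tn n) T) := by rw [hstep' n]
        _ ≤ θ * M (tn n) := step _ (hetn n)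
        _ ≤ θ * (θ ^ n * M s) := mul_le_mul_of_nonneg_left ih hθ0.le
        _ = θ ^ (n + 1) * M s := by ring
  -- choice of n
  have hr1 : 1 ≤ h t / h s := (one_le_div hhs).mpr hhst
  have hrpos : 0 < h t / h s := by positivity
  have hlogr : 0 ≤ Real.log (h t / h s) := Real.log_nonneg hr1
  have hlam : 0 < Real.log (h T) := Real.log_pos hhT
  set q : ℝ := Real.log (h t / h s) / Real.log (h T) with hq
  have hq0 : 0 ≤ q := div_nonneg hlogr hlam.le
  set n : ℕ := ⌊q⌋₊ with hn
  have hnq : (n : ℝ) ≤ q := Nat.floor_le hq0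
  have hqn : q < n + 1 := Nat.lt_floor_add_one q
  -- tn n ≤ t
  have hTn_le : h T ^ n ≤ h t / h s := by
    have h1 : (n : ℝ) * Real.log (h T) ≤ Real.log (h t / h s) := by
      rw [hq, le_div_iff₀ hlam] at hnq; linarith
    have h2 : Real.log (h T ^ n) ≤ Real.log (h t / h s) := by
      rw [Real.log_pow]; exact h1
    have := Real.exp_le_exp.mpr h2
    rwa [Real.exp_log (by positivity), Real.exp_log hrpos] at this
  have htnt : tn n ≤ t := by
    refine (hle_iff (htnJ n) htJ).mp ?_
    rw [hhtn]
    calc h s * h T ^ n ≤ h s * (h t / h s) := by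
          exact mul_le_mul_of_nonneg_left hTn_le hhs.le
      _ = h t := by field_simp
  -- the exponent estimate : θ^(n+1) ≤ (h t / h s)^(-α)
  have hfin : θ ^ (n + 1) ≤ (h t / h s) ^ (-α) := by
    have hlogθ : Real.log θ < 0 := Real.log_neg hθ0 hθ1
    have hθpow : (θ : ℝ) ^ (n + 1) = Real.exp (((n + 1 : ℕ) : ℝ) * Real.log θ) := by
      rw [← Real.log_pow, Real.exp_log (pow_pos hθ0 _)]
    rw [hθpow, Real.rpow_def_of_pos hrpos, Real.exp_le_exp]
    have hα' : Real.log (h t / h s) * (-α) = q * Real.log θ := by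
      rw [hαdef, hq]; field_simp
    rw [hα']
    have h3 := mul_le_mul_of_nonpos_right hqn.le hlogθ.le
    push_cast
    linarith
  -- conclusion
  have hxs : 0 ≤ ‖(Φ s s₀) ξ‖ := norm_nonneg _
  have hpow_eq : θ ^ n = θ⁻¹ * θ ^ (n + 1) := by
    rw [pow_succ]
    field_simp
  calc ‖(Φ t s₀) ξ‖ ≤ M (tn n) := le_csSup (hbdd' _ (hetn n)) (Set.mem_image_of_mem _ htnt)
    _ ≤ θ ^ n * M s := hMn n
    _ ≤ θ ^ n * (C * ‖(Φ s s₀) ξ‖) :=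
        mul_le_mul_of_nonneg_left (claim2 s hes) (pow_nonneg hθ0.le n)
    _ = θ⁻¹ * θ ^ (n + 1) * (C * ‖(Φ s s₀) ξ‖) := by rw [← hpow_eq]
    _ ≤ θ⁻¹ * (h t / h s) ^ (-α) * (C * ‖(Φ s s₀) ξ‖) := by
        refine mul_le_mul_of_nonneg_right ?_ (mul_nonneg (by linarith) hxs)
        exact mul_le_mul_of_nonneg_left hfin (inv_nonneg.mpr hθ0.le)
    _ = K * (h t / h s) ^ (-α) * ‖(Φ s s₀) ξ‖ := by rw [hKdef]; ring
end
end

section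
/- Suppose there exist constants T > e∗, C_T > 1 and θ ∈ (0,1) such that every solution t ↦ x(t) of the evolution family Φ satisfies: (a) |x(t)| ≤ C_T·|x(s)| whenever e∗ ≤ s ≤ t ≤ s∗T, and (b) |x(t)| ≤ θ·sup{|x(u)| : u ∈ J, |u∗t^{∗-1}|∗ ≤ T} for all t ≥ T. Then, with K = θ⁻¹·C_T and α = −ln(θ)/ln(h(T)) (so K ≥ 1 and α > 0), for every solution t ↦ x(t) that is unbounded on [e∗, +∞) there exists T₁ > e∗ such that |x(t)| ≤ K·(h(s)/h(t))^{-α}·|x(s)| for all s ≥ t ≥ T₁. -/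
open Set

noncomputable section

variable {E : Type*} [NormedAddCommGroup E] [NormedSpace ℝ E]

set_option maxHeartbeats 2000000 in
/-- under hypotheses (a) and (b) (as in Statement 11), with
`K = θ⁻¹ C_T` and `α = -ln θ / ln (h T)`, for every solution unbounded on `[e∗,∞)`
there exists `T₁ > e∗` with `|x t| ≤ K (h s / h t)^{-α} |x s|` for all `s ≥ t ≥ T₁`. -/
theorem statement13 {J : Set ℝ} {h hinv : ℝ → ℝ} (hgr : GrowthRate J h hinv)
    {E : Type*} [NormedAddCommGroup E] [NormedSpace ℝ E] [FiniteDimensional ℝ E]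
    (Φ : ℝ → ℝ → (E →L[ℝ] E)) (hΦ : IsEvolutionFamily J Φ)
    (T C θ : ℝ) (hT : estar hinv < T) (hC : 1 < C) (hθ0 : 0 < θ) (hθ1 : θ < 1)
    (ha : ∀ s₀ ∈ J, ∀ ξ : E, ∀ s t : ℝ, estar hinv ≤ s → s ≤ t → t ≤ star h hinv s T →
      ‖(Φ t s₀) ξ‖ ≤ C * ‖(Φ s s₀) ξ‖)
    (hb : ∀ s₀ ∈ J, ∀ ξ : E, ∀ t : ℝ, T ≤ t →
      ‖(Φ t s₀) ξ‖ ≤ θ * sSup ((fun u => ‖(Φ u s₀) ξ‖) ''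
        {u | u ∈ J ∧ absStar h hinv (star h hinv u (sinv h hinv t)) ≤ T}))
    (K α : ℝ) (hKdef : K = θ⁻¹ * C) (hαdef : α = -Real.log θ / Real.log (h T)) :
    ∀ s₀ ∈ J, ∀ ξ : E,
      ¬ (∃ B : ℝ, ∀ t ∈ Set.Ici (estar hinv), ‖(Φ t s₀) ξ‖ ≤ B) →
      ∃ T₁ > estar hinv, ∀ t s : ℝ, T₁ ≤ t → t ≤ s →
        ‖(Φ t s₀) ξ‖ ≤ K * (h s / h t) ^ (-α) * ‖(Φ s s₀) ξ‖ := by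
  intro s₀ hs₀ ξ hunb
  -- abbreviations
  set e := estar hinv with he_def
  set Y : ℝ → ℝ := fun u => ‖(Φ u s₀) ξ‖ with hY
  have hY0 : ∀ t, 0 ≤ Y t := fun t => norm_nonneg _
  -- restated hypotheses (definitional)
  have ha' : ∀ s t : ℝ, e ≤ s → s ≤ t → t ≤ star h hinv s T → Y t ≤ C * Y s :=
    fun s t h1 h2 h3 => ha s₀ hs₀ ξ s t h1 h2 h3
  have hb' : ∀ t : ℝ, T ≤ t → Y t ≤ θ * sSup (Y ''
      {u | u ∈ J ∧ absStar h hinv (star h hinv u (sinv h hinv t)) ≤ T}) :=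
    fun t ht => hb s₀ hs₀ ξ t ht
  have hunb' : ∀ B : ℝ, ∃ t, e ≤ t ∧ B < Y t := by
    intro B
    by_contra hcon
    push_neg at hcon
    exact hunb ⟨B, fun t ht => hcon t ht⟩
  -- basic facts about J, h, hinv
  have hup : ∀ a ∈ J, ∀ b : ℝ, a ≤ b → b ∈ J := by
    rcases hgr.J_eq with ⟨a₀, rfl⟩ | rfl
    · intro a haJ b hab; exact lt_of_lt_of_le haJ hab
    · intro _ _ b _; trivial
  have he_mem : e ∈ J := hgr.inv_mem 1 (Set.mem_Ioi.mpr one_pos)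
  have h_e : h e = 1 := hgr.inv_right 1 (Set.mem_Ioi.mpr one_pos)
  have hmemJ : ∀ t : ℝ, e ≤ t → t ∈ J := fun t ht => hup e he_mem t ht
  have hT_mem : T ∈ J := hmemJ T hT.le
  have hT1 : 1 < h T := by
    have := hgr.mono he_mem hT_mem hT
    rwa [h_e] at this
  have hTpos : 0 < h T := lt_trans one_pos hT1
  have hge1 : ∀ t : ℝ, e ≤ t → 1 ≤ h t := by
    intro t ht
    rw [← h_e]
    exact (hgr.mono.le_iff_le he_mem (hmemJ t ht)).mpr ht
  have hposJ : ∀ t ∈ J, 0 < h t := hgr.pos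
  have hle_iff : ∀ a b : ℝ, a ∈ J → b ∈ J → (h a ≤ h b ↔ a ≤ b) :=
    fun a b haJ hbJ => hgr.mono.le_iff_le haJ hbJ
  have hinv_mono : ∀ a b : ℝ, 0 < a → a ≤ b → hinv a ≤ hinv b := by
    intro a b ha0 hab
    have hb0 : 0 < b := lt_of_lt_of_le ha0 hab
    refine (hle_iff _ _ (hgr.inv_mem a (Set.mem_Ioi.mpr ha0))
      (hgr.inv_mem b (Set.mem_Ioi.mpr hb0))).mp ?_
    rw [hgr.inv_right a (Set.mem_Ioi.mpr ha0), hgr.inv_right b (Set.mem_Ioi.mpr hb0)]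
    exact hab
  have he1 : hinv 1 = e := rfl
  have he_le_hinv : ∀ a : ℝ, 1 ≤ a → e ≤ hinv a := by
    intro a ha1
    have := hinv_mono 1 a one_pos ha1
    rwa [he1] at this
  -- pointwise a-priori bound
  have lem1 : ∀ n : ℕ, ∀ t, e ≤ t → h t ≤ (h T) ^ n → Y t ≤ C ^ n * Y e := by
    intro n
    induction n with
    | zero =>
      intro t het hht
      rw [pow_zero] at hht
      have hte : t = e := by
        refine hgr.mono.injOn (hmemJ t het) he_mem ?_
        rw [h_e]
        exact le_antisymm hht (hge1 t het)
      rw [hte, pow_zero, one_mul]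
    | succ n ih =>
      intro t het hht
      have htJ : t ∈ J := hmemJ t het
      have htpos : 0 < h t := hposJ t htJ
      have hCn : (1:ℝ) ≤ C ^ n := one_le_pow₀ hC.le
      rcases le_or_gt (h t) (h T) with h1 | h1
      · have hstar : star h hinv e T = T := by
          show hinv (h e * h T) = T
          rw [h_e, one_mul, hgr.inv_left T hT_mem]
        have htT : t ≤ T := (hle_iff t T htJ hT_mem).mp h1
        have := ha' e t le_rfl het (by rw [hstar]; exact htT)
        calc Y t ≤ C * Y e := this
          _ ≤ C ^ (n+1) * Y e := by
              refine mul_le_mul_of_nonneg_right ?_ (hY0 e)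
              calc C = C * 1 := (mul_one C).symm
                _ ≤ C * C ^ n := mul_le_mul_of_nonneg_left hCn (by linarith only [hC])
                _ = C ^ (n+1) := by ring
      · -- h T < h t
        set s' := hinv (h t / h T) with hs'def
        have hdivpos : 0 < h t / h T := div_pos htpos hTpos
        have hs'J : s' ∈ J := hgr.inv_mem _ (Set.mem_Ioi.mpr hdivpos)
        have hs'val : h s' = h t / h T := hgr.inv_right _ (Set.mem_Ioi.mpr hdivpos)
        have hes' : e ≤ s' := he_le_hinv _ ((one_le_div hTpos).mpr h1.le)
        have hs't : s' ≤ t := by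
          refine (hle_iff s' t hs'J htJ).mp ?_
          rw [hs'val]
          exact div_le_self htpos.le hT1.le
        have hstar : star h hinv s' T = t := by
          show hinv (h s' * h T) = t
          rw [hs'val, div_mul_cancel₀ _ hTpos.ne', hgr.inv_left t htJ]
        have hs'n : h s' ≤ (h T) ^ n := by
          rw [hs'val, div_le_iff₀ hTpos]
          calc h t ≤ h T ^ (n+1) := hht
            _ = h T ^ n * h T := by ring
        have := ha' s' t hes' hs't (by rw [hstar])
        calc Y t ≤ C * Y s' := this
          _ ≤ C * (C ^ n * Y e) := by
              refine mul_le_mul_of_nonneg_left (ih s' hes' hs'n) (by linarith only [hC])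
          _ = C ^ (n+1) * Y e := by ring
  -- the running sup
  set v : ℝ → ℝ := fun M => sSup (Y '' Set.Icc e M) with hv
  have lem_bdd : ∀ M : ℝ, BddAbove (Y '' Set.Icc e M) := by
    intro M
    rcases le_or_gt e M with hM | hM
    · obtain ⟨n, hn⟩ := pow_unbounded_of_one_lt (h M) hT1
      refine ⟨C ^ n * Y e, ?_⟩
      rintro z ⟨t, ⟨het, htM⟩, rfl⟩
      refine lem1 n t het ?_
      calc h t ≤ h M := (hle_iff t M (hmemJ t het) (hmemJ M hM)).mpr htM
        _ ≤ h T ^ n := hn.le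
    · rw [Set.Icc_eq_empty (not_le.mpr hM), Set.image_empty]
      exact bddAbove_empty
  have lem_ne : ∀ M : ℝ, e ≤ M → (Y '' Set.Icc e M).Nonempty :=
    fun M hM => ⟨Y e, e, ⟨le_rfl, hM⟩, rfl⟩
  have y_le_v : ∀ t M : ℝ, e ≤ t → t ≤ M → Y t ≤ v M :=
    fun t M het htM => le_csSup (lem_bdd M) ⟨t, ⟨het, htM⟩, rfl⟩
  have v_mono : ∀ M M' : ℝ, e ≤ M → M ≤ M' → v M ≤ v M' :=
    fun M M' hM hMM' => csSup_le_csSup (lem_bdd M') (lem_ne M hM)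
      (Set.image_mono (Set.Icc_subset_Icc le_rfl hMM'))
  have v_nonneg : ∀ M : ℝ, e ≤ M → 0 ≤ v M :=
    fun M hM => le_trans (hY0 e) (y_le_v e M le_rfl hM)
  -- the threshold
  set M₂ := hinv (h T * h T) with hM₂def
  have hTTpos : 0 < h T * h T := mul_pos hTpos hTpos
  have hM₂J : M₂ ∈ J := hgr.inv_mem _ (Set.mem_Ioi.mpr hTTpos)
  have hM₂val : h M₂ = h T * h T := hgr.inv_right _ (Set.mem_Ioi.mpr hTTpos)
  have h1TT : (1:ℝ) < h T * h T :=
    lt_of_lt_of_le hT1 (le_mul_of_one_le_left hTpos.le hT1.le)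
  have heM₂ : e ≤ M₂ := he_le_hinv _ h1TT.le
  have heM₂lt : e < M₂ := by
    rcases lt_or_eq_of_le heM₂ with hlt | heq
    · exact hlt
    · exfalso
      have : h e = h M₂ := by rw [heq]
      rw [h_e, hM₂val] at this
      linarith only [this, h1TT]
  have hTM₂ : T ≤ M₂ := by
    refine (hle_iff T M₂ hT_mem hM₂J).mp ?_
    rw [hM₂val]; exact le_mul_of_one_le_left hTpos.le hT1.le
  obtain ⟨t₀, ht₀e, ht₀⟩ := hunb' (v M₂)
  set M₀ := max t₀ M₂ with hM₀def
  have heM₀ : e ≤ M₀ := le_trans heM₂ (le_max_right _ _)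
  have hvM₂M₀ : v M₂ < v M₀ :=
    lt_of_lt_of_le ht₀ (y_le_v t₀ M₀ ht₀e (le_max_left _ _))
  -- Lemma B : geometric growth of the running sup
  have lemB : ∀ M : ℝ, M₀ ≤ M → v M ≤ θ * v (hinv (h M * h T)) := by
    intro M hM₀M
    have heM : e ≤ M := le_trans heM₀ hM₀M
    have hMJ : M ∈ J := hmemJ M heM
    have hMpos : 0 < h M := hposJ M hMJ
    have hM'pos : 0 < h M * h T := mul_pos hMpos hTpos
    set M' := hinv (h M * h T) with hM'def
    have hM'J : M' ∈ J := hgr.inv_mem _ (Set.mem_Ioi.mpr hM'pos)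
    have hM'val : h M' = h M * h T := hgr.inv_right _ (Set.mem_Ioi.mpr hM'pos)
    have hMM' : M ≤ M' := by
      have h1 : h M ≤ h M * h T := le_mul_of_one_le_right hMpos.le hT1.le
      have := hinv_mono _ _ hMpos h1
      rwa [hgr.inv_left M hMJ] at this
    have heM' : e ≤ M' := le_trans heM hMM'
    by_contra hcon
    push_neg at hcon
    have hvM₂M : v M₂ < v M := lt_of_lt_of_le hvM₂M₀ (v_mono M₀ M heM₀ hM₀M)
    set δ := min (v M - θ * v M') (v M - v M₂) with hδdef
    have hδpos : 0 < δ := lt_min (by linarith only [hcon]) (by linarith only [hvM₂M])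
    obtain ⟨z, hz, hzgt⟩ := exists_lt_of_lt_csSup (lem_ne M heM)
      (show v M - δ < v M by linarith only [hδpos])
    obtain ⟨t, ⟨het, htM⟩, rfl⟩ := hz
    have htJ : t ∈ J := hmemJ t het
    have htpos : 0 < h t := hposJ t htJ
    have hyt2 : v M₂ < Y t := by
      have := min_le_right (v M - θ * v M') (v M - v M₂)
      linarith only [this, hzgt]
    have hM₂t : M₂ < t := by
      by_contra hc
      push_neg at hc
      exact absurd (y_le_v t M₂ het hc) (not_le.mpr hyt2)
    have hTt : T ≤ t := le_trans hTM₂ hM₂t.le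
    have hht : h T * h T < h t := by
      have := hgr.mono hM₂J htJ hM₂t
      rwa [hM₂val] at this
    -- the noncriticality set is inside [e, M']
    have hsub : {u | u ∈ J ∧ absStar h hinv (star h hinv u (sinv h hinv t)) ≤ T}
        ⊆ Set.Icc e M' := by
      rintro u ⟨huJ, habs⟩
      have hupos : 0 < h u := hposJ u huJ
      have hwpos : 0 < h u / h t := div_pos hupos htpos
      have hw_eq : star h hinv u (sinv h hinv t) = hinv (h u / h t) := by
        show hinv (h u * h (hinv (1 / h t))) = hinv (h u / h t)
        rw [hgr.inv_right (1 / h t) (Set.mem_Ioi.mpr (by positivity)), mul_one_div]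
      set w := star h hinv u (sinv h hinv t) with hwdef
      have hwJ : w ∈ J := by rw [hw_eq]; exact hgr.inv_mem _ (Set.mem_Ioi.mpr hwpos)
      have hwval : h w = h u / h t := by
        rw [hw_eq]; exact hgr.inv_right _ (Set.mem_Ioi.mpr hwpos)
      have htM' : h t ≤ h M := (hle_iff t M htJ hMJ).mpr htM
      simp only [absStar, ← he_def] at habs
      split_ifs at habs with hew
      · -- e ≤ w : h u ≥ h t
        have h1w : 1 ≤ h w := by
          rw [← h_e]; exact (hle_iff e w he_mem hwJ).mpr hew
        have huht : h t ≤ h u := by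
          rw [hwval, le_div_iff₀ htpos, one_mul] at h1w
          exact h1w
        have hwT : h w ≤ h T := (hle_iff w T hwJ hT_mem).mpr habs
        have hu_ub : h u ≤ h M * h T := by
          rw [hwval, div_le_iff₀ htpos] at hwT
          calc h u ≤ h T * h t := hwT
            _ = h t * h T := mul_comm _ _
            _ ≤ h M * h T := mul_le_mul_of_nonneg_right htM' hTpos.le
        constructor
        · refine le_trans het ?_
          exact (hle_iff t u htJ huJ).mp huht
        · refine (hle_iff u M' huJ hM'J).mp ?_
          rw [hM'val]; exact hu_ub
      · -- w < e : h u < h t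
        push_neg at hew
        have hwlt1 : h w < 1 := by
          rw [← h_e]; exact hgr.mono hwJ he_mem hew
        have huht : h u < h t := by
          rw [hwval, div_lt_one htpos] at hwlt1
          exact hwlt1
        have hswpos : 0 < 1 / h w := by
          rw [hwval]; positivity
        have hsw_val : h (sinv h hinv w) = 1 / h w := by
          show h (hinv (1 / h w)) = 1 / h w
          exact hgr.inv_right _ (Set.mem_Ioi.mpr hswpos)
        have hswJ : sinv h hinv w ∈ J := hgr.inv_mem _ (Set.mem_Ioi.mpr hswpos)
        have hswT : h (sinv h hinv w) ≤ h T := (hle_iff _ T hswJ hT_mem).mpr habs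
        rw [hsw_val, hwval, one_div_div] at hswT
        -- h t / h u ≤ h T
        have hu_lb : h t / h T ≤ h u := by
          rw [div_le_iff₀ hupos] at hswT
          rw [div_le_iff₀ hTpos, mul_comm]
          exact hswT
        have h1u : 1 ≤ h u := by
          have : h T ≤ h t / h T := by
            rw [le_div_iff₀ hTpos]; exact hht.le
          linarith only [this, hu_lb, hT1]
        constructor
        · rw [← h_e] at h1u
          exact (hle_iff e u he_mem huJ).mp h1u
        · refine (hle_iff u M' huJ hM'J).mp ?_
          rw [hM'val]
          calc h u ≤ h t := huht.le
            _ ≤ h M := htM'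
            _ ≤ h M * h T := le_mul_of_one_le_right hMpos.le hT1.le
    -- t itself belongs to the noncriticality set
    have htmem : t ∈ {u | u ∈ J ∧ absStar h hinv (star h hinv u (sinv h hinv t)) ≤ T} := by
      refine ⟨htJ, ?_⟩
      have hstt : star h hinv t (sinv h hinv t) = e := by
        show hinv (h t * h (hinv (1 / h t))) = e
        rw [hgr.inv_right (1 / h t) (Set.mem_Ioi.mpr (by positivity)),
          mul_one_div, div_self htpos.ne']
        exact he1
      rw [hstt]
      simp only [absStar, ← he_def, if_pos le_rfl]
      exact hT.le
    have hsup_le : sSup (Y ''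
        {u | u ∈ J ∧ absStar h hinv (star h hinv u (sinv h hinv t)) ≤ T}) ≤ v M' :=
      csSup_le_csSup (lem_bdd M') ⟨Y t, t, htmem, rfl⟩ (Set.image_mono hsub)
    have hfinal : Y t ≤ θ * v M' :=
      le_trans (hb' t hTt) (mul_le_mul_of_nonneg_left hsup_le hθ0.le)
    have hδ1 : δ ≤ v M - θ * v M' := min_le_left _ _
    linarith only [hδ1, hzgt, hfinal]
  -- Lemma C : near-max at the right end
  have lemC : ∀ s' : ℝ, M₀ ≤ s' → v (hinv (h s' * h T)) ≤ C * Y s' := by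
    intro s' hM₀s'
    have hes' : e ≤ s' := le_trans heM₀ hM₀s'
    have hs'J : s' ∈ J := hmemJ s' hes'
    have hs'pos : 0 < h s' := hposJ s' hs'J
    have hM'pos : 0 < h s' * h T := mul_pos hs'pos hTpos
    set M' := hinv (h s' * h T) with hM'def
    have hM'J : M' ∈ J := hgr.inv_mem _ (Set.mem_Ioi.mpr hM'pos)
    have hM'val : h M' = h s' * h T := hgr.inv_right _ (Set.mem_Ioi.mpr hM'pos)
    have hs'M' : s' ≤ M' := by
      have h1 : h s' ≤ h s' * h T := le_mul_of_one_le_right hs'pos.le hT1.le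
      have := hinv_mono _ _ hs'pos h1
      rwa [hgr.inv_left s' hs'J] at this
    have heM' : e ≤ M' := le_trans hes' hs'M'
    by_contra hcon
    push_neg at hcon
    have hub : v M' ≤ max (v s') (C * Y s') := by
      refine csSup_le (lem_ne M' heM') ?_
      rintro z ⟨t, ⟨het, htM'⟩, rfl⟩
      rcases le_or_gt t s' with hts | hst
      · exact le_max_of_le_left (y_le_v t s' het hts)
      · refine le_max_of_le_right ?_
        exact ha' s' t hes' hst.le htM'
    have h1 : v M' ≤ v s' := by
      rcases le_max_iff.mp hub with h | h
      · exact h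
      · exact absurd h (not_le.mpr hcon)
    have h2 : v s' ≤ θ * v M' := lemB s' hM₀s'
    have h3 : 0 ≤ C * Y s' := mul_nonneg (by linarith only [hC]) (hY0 s')
    have h4 : v M' ≤ θ * v M' := le_trans h1 h2
    have h5 : 0 < v M' := lt_of_le_of_lt h3 hcon
    have h6 : θ * v M' < v M' := mul_lt_of_lt_one_left h5 hθ1
    linarith only [h4, h6]
  -- Lemma D : iterate lemma B
  have lemD : ∀ n : ℕ, ∀ M : ℝ, M₀ ≤ M → v M ≤ θ ^ n * v (hinv (h M * (h T) ^ n)) := by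
    intro n
    induction n with
    | zero =>
      intro M hM
      have heM : e ≤ M := le_trans heM₀ hM
      rw [pow_zero, pow_zero, mul_one, one_mul, hgr.inv_left M (hmemJ M heM)]
    | succ n ih =>
      intro M hM
      have heM : e ≤ M := le_trans heM₀ hM
      have hMJ : M ∈ J := hmemJ M heM
      have hMpos : 0 < h M := hposJ M hMJ
      have hTn1 : (1:ℝ) ≤ h T ^ n := one_le_pow₀ hT1.le
      have hpow : (0:ℝ) < h M * h T ^ n := by positivity
      set Mn := hinv (h M * h T ^ n) with hMndef
      have hMnval : h Mn = h M * h T ^ n := hgr.inv_right _ (Set.mem_Ioi.mpr hpow)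
      have hMMn : M ≤ Mn := by
        have h1 : h M ≤ h M * h T ^ n := le_mul_of_one_le_right hMpos.le hTn1
        have := hinv_mono _ _ hMpos h1
        rwa [hgr.inv_left M hMJ] at this
      have hM₀Mn : M₀ ≤ Mn := le_trans hM hMMn
      have hB := lemB Mn hM₀Mn
      have heq : hinv (h Mn * h T) = hinv (h M * h T ^ (n+1)) := by
        rw [hMnval, pow_succ, mul_assoc]
      calc v M ≤ θ ^ n * v Mn := ih M hM
        _ ≤ θ ^ n * (θ * v (hinv (h M * h T ^ (n+1)))) := by
            rw [← heq]
            exact mul_le_mul_of_nonneg_left hB (pow_nonneg hθ0.le n)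
        _ = θ ^ (n+1) * v (hinv (h M * h T ^ (n+1))) := by ring
  -- conclusion
  refine ⟨M₀, lt_of_lt_of_le heM₂lt (le_max_right _ _), ?_⟩
  intro t s hM₀t hts
  have het : e ≤ t := le_trans heM₀ hM₀t
  have hes : e ≤ s := le_trans het hts
  have htJ : t ∈ J := hmemJ t het
  have hsJ : s ∈ J := hmemJ s hes
  have htpos : 0 < h t := hposJ t htJ
  have hspos : 0 < h s := hposJ s hsJ
  have hts' : h t ≤ h s := (hle_iff t s htJ hsJ).mpr hts
  set L := Real.log (h T) with hL
  have hLpos : 0 < L := Real.log_pos hT1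
  set D := Real.log (h s / h t) with hD
  have hDnonneg : 0 ≤ D := Real.log_nonneg ((one_le_div htpos).mpr hts')
  set n := ⌊D / L⌋₊ with hn
  have hn_le : (n : ℝ) * L ≤ D := by
    have h1 := Nat.floor_le (div_nonneg hDnonneg hLpos.le)
    calc (n : ℝ) * L ≤ D / L * L := mul_le_mul_of_nonneg_right h1 hLpos.le
      _ = D := div_mul_cancel₀ D hLpos.ne'
  have hn_gt : D / L < (n : ℝ) + 1 := Nat.lt_floor_add_one (D / L)
  have hTn : (h T : ℝ) ^ n = Real.exp ((n : ℝ) * L) := by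
    rw [hL, ← Real.exp_log hTpos, ← Real.exp_nat_mul, Real.exp_log hTpos]
  have hpow_le : h t * (h T) ^ n ≤ h s := by
    have h1 : (h T) ^ n ≤ h s / h t := by
      rw [hTn]
      calc Real.exp ((n : ℝ) * L) ≤ Real.exp D := Real.exp_le_exp.mpr hn_le
        _ = h s / h t := by rw [hD, Real.exp_log (div_pos hspos htpos)]
    calc h t * (h T) ^ n ≤ h t * (h s / h t) := by
          exact mul_le_mul_of_nonneg_left h1 htpos.le
      _ = h s := by field_simp
  have hXpos : (0:ℝ) < h t * (h T) ^ n := by positivity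
  have hX_le_s : hinv (h t * (h T) ^ n) ≤ s := by
    have := hinv_mono _ _ hXpos hpow_le
    rwa [hgr.inv_left s hsJ] at this
  have heX : e ≤ hinv (h t * (h T) ^ n) := by
    refine he_le_hinv _ ?_
    have h1 := hge1 t het
    have h2 : (1:ℝ) ≤ h T ^ n := one_le_pow₀ hT1.le
    exact le_trans h1 (le_mul_of_one_le_right (by linarith only [h1]) h2)
  have hM₀s : M₀ ≤ s := le_trans hM₀t hts
  have main : Y t ≤ θ ^ n * (θ * (C * Y s)) := by
    calc Y t ≤ v t := y_le_v t t het le_rfl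
      _ ≤ θ ^ n * v (hinv (h t * (h T) ^ n)) := lemD n t hM₀t
      _ ≤ θ ^ n * v s := mul_le_mul_of_nonneg_left (v_mono _ _ heX hX_le_s)
          (pow_nonneg hθ0.le n)
      _ ≤ θ ^ n * (θ * v (hinv (h s * h T))) :=
          mul_le_mul_of_nonneg_left (lemB s hM₀s) (pow_nonneg hθ0.le n)
      _ ≤ θ ^ n * (θ * (C * Y s)) := by
          refine mul_le_mul_of_nonneg_left ?_ (pow_nonneg hθ0.le n)
          exact mul_le_mul_of_nonneg_left (lemC s hM₀s) hθ0.le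
  have hlogθ : Real.log θ < 0 := Real.log_neg hθ0 hθ1
  have hrpow : (h s / h t) ^ (-α) = Real.exp (-α * D) := by
    rw [Real.rpow_def_of_pos (div_pos hspos htpos), ← hD]
    ring_nf
  have hkey : ((n : ℝ) + 2) * Real.log θ ≤ -α * D := by
    have hDL : D / L ≤ (n : ℝ) + 2 := by linarith only [hn_gt]
    have h1 : ((n : ℝ) + 2) * Real.log θ ≤ (D / L) * Real.log θ :=
      mul_le_mul_of_nonpos_right hDL hlogθ.le
    have h2 : -α * D = (D / L) * Real.log θ := by
      rw [hαdef]
      field_simp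
    linarith only [h1, h2]
  have hexp : θ ^ (n + 2) ≤ Real.exp (-α * D) := by
    have h1 : θ ^ (n + 2) = Real.exp (((n : ℝ) + 2) * Real.log θ) := by
      rw [← Real.exp_log hθ0, ← Real.exp_nat_mul, Real.exp_log hθ0]
      push_cast
      ring_nf
    rw [h1]
    exact Real.exp_le_exp.mpr hkey
  have hcoef : θ ^ n * (θ * C) ≤ K * (h s / h t) ^ (-α) := by
    have h2 : θ ^ n * (θ * C) = θ⁻¹ * C * θ ^ (n + 2) := by
      field_simp
      ring
    calc θ ^ n * (θ * C) = θ⁻¹ * C * θ ^ (n + 2) := h2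
      _ ≤ θ⁻¹ * C * Real.exp (-α * D) := by
          refine mul_le_mul_of_nonneg_left hexp ?_
          positivity
      _ = K * (h s / h t) ^ (-α) := by rw [hrpow, hKdef]
  show Y t ≤ K * (h s / h t) ^ (-α) * Y s
  calc Y t ≤ θ ^ n * (θ * (C * Y s)) := main
    _ = θ ^ n * (θ * C) * Y s := by ring
    _ ≤ K * (h s / h t) ^ (-α) * Y s := mul_le_mul_of_nonneg_right hcoef (hY0 s)
end
end
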